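/- arXiv:0810.0812 — 8 statements merged into one kernel-verified Lean document; each statement's English description precedes it below -/
import Mathlib

section
/- The maps m := δ† and u := ε† make H a commutative †-Frobenius monoid: m is associative (m ∘ (m ⊗ id_H) = m ∘ (id_H ⊗ m)), commutative (m ∘ swap = m), has u(1) as a two-sided unit (m(u(1) ⊗ x) = x = m(x ⊗ u(1)) for all x ∈ H), and the Frobenius law (m ⊗ id_H) ∘ (id_H ⊗ δ) = δ ∘ m holds as an equality of linear maps H ⊗ H → H ⊗ H. -/
noncomputable section

open scoped TensorProduct ComplexConjugate InnerProductSpace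

open scoped TensorProduct ComplexConjugate InnerProductSpace

variable {H : Type*} [NormedAddCommGroup H] [InnerProductSpace ℂ H] [FiniteDimensional ℂ H]

namespace TensorIP

variable (H) in
/-- A basis of `H ⊗ H` built from an orthonormal basis of `H`. -/
def tb : Module.Basis (Fin (Module.finrank ℂ H) × Fin (Module.finrank ℂ H)) ℂ (H ⊗[ℂ] H) :=
  Module.Basis.tensorProduct (stdOrthonormalBasis ℂ H).toBasis (stdOrthonormalBasis ℂ H).toBasis

variable (H) in
/-- The canonical inner product space structure on `H ⊗ H`, which is determined by
`⟪a ⊗ b, c ⊗ d⟫ = ⟪a,c⟫ * ⟪b,d⟫` (see `TensorIP.inner_tmul` below). -/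
def core : InnerProductSpace.Core ℂ (H ⊗[ℂ] H) where
  inner x y := ∑ p, conj ((tb H).repr x p) * ((tb H).repr y p)
  conj_inner_symm x y := by
    simp only [map_sum, map_mul, starRingEnd_self_apply]
    exact Finset.sum_congr rfl fun p _ => by ring
  re_inner_nonneg x := by
    show 0 ≤ RCLike.re (∑ p, conj ((tb H).repr x p) * ((tb H).repr x p))
    have h : ∀ p : Fin (Module.finrank ℂ H) × Fin (Module.finrank ℂ H),
        conj ((tb H).repr x p) * ((tb H).repr x p)
          = ((Complex.normSq ((tb H).repr x p) : ℝ) : ℂ) := fun p => by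
      rw [mul_comm, Complex.mul_conj]
    simp only [h]
    rw [map_sum]
    refine Finset.sum_nonneg fun p _ => ?_
    simp [Complex.normSq_nonneg]
  add_left x y z := by
    simp only [map_add, Finsupp.add_apply]
    rw [← Finset.sum_add_distrib]
    exact Finset.sum_congr rfl fun p _ => by ring
  smul_left x y r := by
    simp only [map_smul, Finsupp.smul_apply, smul_eq_mul, map_mul, Finset.mul_sum]
    exact Finset.sum_congr rfl fun p _ => by ring
  definite x hx := by
    have hx' : ∑ p, conj ((tb H).repr x p) * ((tb H).repr x p) = 0 := hx
    have h2 : ∑ p, ((Complex.normSq ((tb H).repr x p) : ℝ) : ℂ) = 0 := by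
      rw [← hx']
      exact Finset.sum_congr rfl fun p _ => by rw [mul_comm, Complex.mul_conj]
    have h3 : ∑ p, Complex.normSq ((tb H).repr x p) = 0 := by exact_mod_cast h2
    have h4 : ∀ p ∈ Finset.univ, Complex.normSq ((tb H).repr x p) = 0 :=
      (Finset.sum_eq_zero_iff_of_nonneg fun p _ => Complex.normSq_nonneg _).mp h3
    have h5 : (tb H).repr x = 0 := by
      ext p
      exact Complex.normSq_eq_zero.mp (h4 p (Finset.mem_univ p))
    simpa using (tb H).repr.map_eq_zero_iff.mp h5

instance : NormedAddCommGroup (H ⊗[ℂ] H) :=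
  @InnerProductSpace.Core.toNormedAddCommGroup ℂ (H ⊗[ℂ] H) _ _ _ (core H)

instance : InnerProductSpace ℂ (H ⊗[ℂ] H) := InnerProductSpace.ofCore (core H).toCore

theorem inner_tmul (a b c d : H) :
    @inner ℂ (H ⊗[ℂ] H) InnerProductSpace.toInner (a ⊗ₜ[ℂ] b) (c ⊗ₜ[ℂ] d)
      = ⟪a, c⟫_ℂ * ⟪b, d⟫_ℂ := by
  have key : ∀ (x y : H) (p : Fin (Module.finrank ℂ H) × Fin (Module.finrank ℂ H)),
      (tb H).repr (x ⊗ₜ[ℂ] y) p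
        = ⟪(stdOrthonormalBasis ℂ H) p.1, x⟫_ℂ * ⟪(stdOrthonormalBasis ℂ H) p.2, y⟫_ℂ := by
    rintro x y ⟨i, j⟩
    rw [tb, Module.Basis.tensorProduct_repr_tmul_apply, smul_eq_mul,
      OrthonormalBasis.coe_toBasis_repr_apply, OrthonormalBasis.coe_toBasis_repr_apply,
      OrthonormalBasis.repr_apply_apply, OrthonormalBasis.repr_apply_apply, mul_comm]
  show (∑ p, conj ((tb H).repr (a ⊗ₜ[ℂ] b) p) * ((tb H).repr (c ⊗ₜ[ℂ] d) p)) = _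
  simp only [key, map_mul]
  rw [← Finset.univ_product_univ, Finset.sum_product]
  have h : ∀ i j : Fin (Module.finrank ℂ H),
      (conj ⟪(stdOrthonormalBasis ℂ H) i, a⟫_ℂ * conj ⟪(stdOrthonormalBasis ℂ H) j, b⟫_ℂ) *
        (⟪(stdOrthonormalBasis ℂ H) i, c⟫_ℂ * ⟪(stdOrthonormalBasis ℂ H) j, d⟫_ℂ)
      = (⟪a, (stdOrthonormalBasis ℂ H) i⟫_ℂ * ⟪(stdOrthonormalBasis ℂ H) i, c⟫_ℂ) *
        (⟪b, (stdOrthonormalBasis ℂ H) j⟫_ℂ * ⟪(stdOrthonormalBasis ℂ H) j, d⟫_ℂ) := by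
    intro i j
    rw [inner_conj_symm, inner_conj_symm]; ring
  simp only [h]
  rw [← Finset.sum_mul_sum]
  rw [OrthonormalBasis.sum_inner_mul_inner, OrthonormalBasis.sum_inner_mul_inner]

end TensorIP

section Aux

set_option linter.unusedSectionVars false

variable {H : Type*} [NormedAddCommGroup H] [InnerProductSpace ℂ H] [FiniteDimensional ℂ H]
  {ι : Type*} [Fintype ι]

lemma inner_ext_basis (b : Module.Basis ι ℂ H) {x y : H}
    (h : ∀ k, ⟪x, b k⟫_ℂ = ⟪y, b k⟫_ℂ) : x = y := by
  have h2 : (innerSL ℂ (x - y)).toLinearMap = 0 := b.ext fun k => by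
    simp [inner_sub_left, h k]
  have h3 : ⟪x - y, x - y⟫_ℂ = 0 := by
    have := congrArg (fun f => f (x - y)) h2
    simp only [ContinuousLinearMap.coe_coe, innerSL_apply_apply, LinearMap.zero_apply] at this
    exact this
  exact sub_eq_zero.mp (inner_self_eq_zero.mp h3)

lemma inner_basis_basis [DecidableEq ι] (b : Module.Basis ι ℂ H)
    (horth : ∀ i j, i ≠ j → ⟪b i, b j⟫_ℂ = 0) (i k : ι) :
    ⟪b i, b k⟫_ℂ = if i = k then ((‖b i‖ : ℂ)^2) else 0 := by
  by_cases h : i = k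
  · subst h; simp [inner_self_eq_norm_sq_to_K]
  · simp [h, horth i k h]

lemma norm_sq_basis_ne_zero (b : Module.Basis ι ℂ H) (i : ι) : ((‖b i‖ : ℂ)^2) ≠ 0 := by
  have h : ‖b i‖ ≠ 0 := norm_ne_zero_iff.mpr (b.ne_zero i)
  exact pow_ne_zero 2 (Complex.ofReal_ne_zero.mpr h)

lemma madj_apply [DecidableEq ι] (b : Module.Basis ι ℂ H)
    (horth : ∀ i j, i ≠ j → ⟪b i, b j⟫_ℂ = 0)
    (δ : H →ₗ[ℂ] H ⊗[ℂ] H) (hδ : ∀ i, δ (b i) = b i ⊗ₜ[ℂ] b i) (i j : ι) :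
    LinearMap.adjoint δ (b i ⊗ₜ[ℂ] b j)
      = if i = j then ((‖b i‖ : ℂ)^2) • b i else 0 := by
  apply inner_ext_basis b
  intro k
  rw [LinearMap.adjoint_inner_left, hδ k, TensorIP.inner_tmul]
  by_cases hij : i = j
  · subst hij
    rw [if_pos rfl, inner_smul_left, map_pow, Complex.conj_ofReal,
      inner_basis_basis b horth]
    split_ifs <;> ring
  · rw [if_neg hij, inner_zero_left, inner_basis_basis b horth,
      inner_basis_basis b horth]
    split_ifs with h1 h2
    · exact absurd (h1.trans h2.symm) hij
    all_goals ring

lemma uadj_apply (b : Module.Basis ι ℂ H)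
    (horth : ∀ i j, i ≠ j → ⟪b i, b j⟫_ℂ = 0)
    (ε : H →ₗ[ℂ] ℂ) (hε : ∀ i, ε (b i) = 1) :
    LinearMap.adjoint ε 1 = ∑ i, (((‖b i‖ : ℂ)^2))⁻¹ • b i := by
  classical
  apply inner_ext_basis b
  intro k
  rw [LinearMap.adjoint_inner_left, hε k]
  simp only [sum_inner, inner_smul_left]
  rw [Finset.sum_eq_single k]
  · rw [inner_basis_basis b horth, if_pos rfl, map_inv₀, map_pow, Complex.conj_ofReal,
      inv_mul_cancel₀ (norm_sq_basis_ne_zero b k)]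
    simp [RCLike.inner_apply]
  · intro i _ hik
    rw [inner_basis_basis b horth, if_neg hik, mul_zero]
  · intro h
    exact absurd (Finset.mem_univ k) h

end Aux


/-- The adjoints `m := δ†` and `u := ε†` of copying and deleting maps of an orthogonal basis
make `H` a commutative †-Frobenius monoid: `m` is associative, commutative, has `u 1` as a
two-sided unit, and the Frobenius law `(m ⊗ id) ∘ (id ⊗ δ) = δ ∘ m` holds. -/
theorem dagger_frobenius_of_orthogonal_basis
    {H : Type*} [NormedAddCommGroup H] [InnerProductSpace ℂ H] [FiniteDimensional ℂ H]
    {ι : Type*} [Fintype ι] (b : Module.Basis ι ℂ H)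
    (horth : ∀ i j, i ≠ j → ⟪b i, b j⟫_ℂ = 0)
    (δ : H →ₗ[ℂ] H ⊗[ℂ] H) (ε : H →ₗ[ℂ] ℂ)
    (hδ : ∀ i, δ (b i) = b i ⊗ₜ[ℂ] b i) (hε : ∀ i, ε (b i) = 1) :
    (LinearMap.adjoint δ ∘ₗ TensorProduct.map (LinearMap.adjoint δ) LinearMap.id
        = LinearMap.adjoint δ ∘ₗ TensorProduct.map LinearMap.id (LinearMap.adjoint δ)
            ∘ₗ (TensorProduct.assoc ℂ H H H).toLinearMap)
      ∧ (LinearMap.adjoint δ ∘ₗ (TensorProduct.comm ℂ H H).toLinearMap = LinearMap.adjoint δ)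
      ∧ (∀ x : H, LinearMap.adjoint δ (LinearMap.adjoint ε 1 ⊗ₜ[ℂ] x) = x)
      ∧ (∀ x : H, LinearMap.adjoint δ (x ⊗ₜ[ℂ] LinearMap.adjoint ε 1) = x)
      ∧ (TensorProduct.map (LinearMap.adjoint δ) LinearMap.id
            ∘ₗ (TensorProduct.assoc ℂ H H H).symm.toLinearMap
            ∘ₗ TensorProduct.map LinearMap.id δ
          = δ ∘ₗ LinearMap.adjoint δ) := by
  classical
  have hmb : ∀ i j, LinearMap.adjoint δ (b i ⊗ₜ[ℂ] b j)
      = if i = j then ((‖b i‖ : ℂ)^2) • b i else 0 := madj_apply b horth δ hδ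
  have hub : LinearMap.adjoint ε 1 = ∑ i, (((‖b i‖ : ℂ)^2))⁻¹ • b i :=
    uadj_apply b horth ε hε
  refine ⟨?_, ?_, ?_, ?_, ?_⟩
  · refine ((b.tensorProduct b).tensorProduct b).ext fun p => ?_
    obtain ⟨⟨i, j⟩, k⟩ := p
    simp only [Module.Basis.tensorProduct_apply, LinearMap.comp_apply, TensorProduct.map_tmul,
      LinearMap.id_apply, LinearEquiv.coe_coe, TensorProduct.assoc_tmul, hmb]
    rcases eq_or_ne i j with rfl | hij
    · rcases eq_or_ne i k with rfl | hik
      · simp [hmb, ← TensorProduct.smul_tmul', TensorProduct.tmul_smul, map_smul, smul_smul]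
      · simp [hik, hmb, ← TensorProduct.smul_tmul', TensorProduct.tmul_smul, map_smul,
          smul_smul]
    · rcases eq_or_ne j k with rfl | hjk
      · simp [hij, hmb, TensorProduct.tmul_smul, map_smul]
      · simp [hij, hjk, hmb, TensorProduct.tmul_smul, map_smul]
  · refine (b.tensorProduct b).ext fun p => ?_
    obtain ⟨i, j⟩ := p
    simp only [Module.Basis.tensorProduct_apply, LinearMap.comp_apply, LinearEquiv.coe_coe,
      TensorProduct.comm_tmul, hmb]
    rcases eq_or_ne i j with hij | hij
    · simp [hij]
    · simp [hij, Ne.symm hij]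
  · intro x
    have key : LinearMap.adjoint δ ∘ₗ TensorProduct.mk ℂ H H (LinearMap.adjoint ε 1)
        = LinearMap.id := by
      refine b.ext fun j => ?_
      simp only [LinearMap.comp_apply, TensorProduct.mk_apply, LinearMap.id_apply, hub]
      rw [TensorProduct.sum_tmul]
      simp only [← TensorProduct.smul_tmul', map_sum, map_smul, hmb]
      rw [Finset.sum_eq_single j]
      · simp [smul_smul, inv_mul_cancel₀ (norm_sq_basis_ne_zero b j)]
      · intro i _ hij; simp [hij]
      · simp
    simpa using LinearMap.congr_fun key x
  · intro x
    have key : LinearMap.adjoint δ ∘ₗ (TensorProduct.mk ℂ H H).flip (LinearMap.adjoint ε 1)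
        = LinearMap.id := by
      refine b.ext fun j => ?_
      simp only [LinearMap.comp_apply, LinearMap.flip_apply, TensorProduct.mk_apply,
        LinearMap.id_apply, hub]
      rw [TensorProduct.tmul_sum]
      simp only [TensorProduct.tmul_smul, map_sum, map_smul, hmb]
      rw [Finset.sum_eq_single j]
      · simp [smul_smul, inv_mul_cancel₀ (norm_sq_basis_ne_zero b j)]
      · intro i _ hij; simp [Ne.symm hij]
      · simp
    simpa using LinearMap.congr_fun key x
  · refine (b.tensorProduct b).ext fun p => ?_
    obtain ⟨i, j⟩ := p
    simp only [Module.Basis.tensorProduct_apply, LinearMap.comp_apply, TensorProduct.map_tmul,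
      LinearMap.id_apply, LinearEquiv.coe_coe, hδ, TensorProduct.assoc_symm_tmul, hmb]
    rcases eq_or_ne i j with hij | hij <;>
      simp [hij, hδ, ← TensorProduct.smul_tmul', TensorProduct.tmul_smul, map_smul]
end
end

section
/- Let c : ι → ℂ be coefficients such that c i ≠ 0 and c j ≠ 0 for some indices i ≠ j. Then the vector Σ_k c k · (φ k ⊗ φ k) ∈ H ⊗ H is entangled: for all vectors a, b ∈ H one has Σ_k c k · (φ k ⊗ φ k) ≠ a ⊗ b. -/
noncomputable section

open scoped TensorProduct ComplexConjugate InnerProductSpace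

/-- If at least two of the coefficients `c k` are nonzero, then `Σ_k c k • (φ k ⊗ φ k)`
is entangled: it is not of the form `a ⊗ b`. -/
theorem sum_tmul_entangled
    {H : Type*} [NormedAddCommGroup H] [InnerProductSpace ℂ H] [FiniteDimensional ℂ H]
    {ι : Type*} [Fintype ι] (b : Module.Basis ι ℂ H)
    (horth : ∀ i j, i ≠ j → ⟪b i, b j⟫_ℂ = 0)
    (c : ι → ℂ) (i j : ι) (hij : i ≠ j) (hci : c i ≠ 0) (hcj : c j ≠ 0) :
    ∀ a v : H, (∑ k, c k • (b k ⊗ₜ[ℂ] b k)) ≠ a ⊗ₜ[ℂ] v := by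
  intro a v h
  set B := Module.Basis.tensorProduct b b with hB
  have key : ∀ p : ι × ι, B.repr (∑ k, c k • (b k ⊗ₜ[ℂ] b k)) p
      = b.repr a p.1 * b.repr v p.2 := by
    intro p
    rw [h, Module.Basis.tensorProduct_repr_tmul_apply]
    rw [smul_eq_mul]; ring
  have hii := key (i, i)
  have hjj := key (j, j)
  have hijp := key (i, j)
  simp only [map_sum, map_smul, Finsupp.coe_finset_sum, Finsupp.coe_smul, Finset.sum_apply,
    Pi.smul_apply, hB, Module.Basis.tensorProduct_repr_tmul_apply, Module.Basis.repr_self,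
    Finsupp.single_apply, smul_eq_mul] at hii hjj hijp
  rw [Finset.sum_eq_single i] at hii hijp
  rw [Finset.sum_eq_single j] at hjj
  all_goals try (intro k _ hk; simp [hk])
  all_goals try (intro hk; simp at hk)
  simp [hij] at hii hjj hijp
  have hai : b.repr a i ≠ 0 := fun h0 => hci (by rw [hii, h0, zero_mul])
  have hvj : b.repr v j ≠ 0 := fun h0 => hcj (by rw [hjj, h0, mul_zero])
  rcases hijp with h' | h'
  · exact hai h'
  · exact hvj h'
end
end

section
/- A vector ψ ∈ H satisfies δ(ψ) = ψ ⊗ ψ if and only if ψ = 0 or ψ = φ i for some index i. In particular, the map δ faithfully encodes the orthogonal basis: the nonzero solutions of δ(ψ) = ψ ⊗ ψ are exactly the basis vectors. -/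
noncomputable section

open scoped TensorProduct ComplexConjugate InnerProductSpace

/-- The nonzero solutions of `δ ψ = ψ ⊗ ψ` are exactly the basis vectors:
`δ` faithfully encodes the orthogonal basis. -/
theorem copied_iff_basis_vector
    {H : Type*} [NormedAddCommGroup H] [InnerProductSpace ℂ H] [FiniteDimensional ℂ H]
    {ι : Type*} [Fintype ι] (b : Module.Basis ι ℂ H)
    (horth : ∀ i j, i ≠ j → ⟪b i, b j⟫_ℂ = 0)
    (δ : H →ₗ[ℂ] H ⊗[ℂ] H) (hδ : ∀ i, δ (b i) = b i ⊗ₜ[ℂ] b i) (ψ : H) :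
    δ ψ = ψ ⊗ₜ[ℂ] ψ ↔ ψ = 0 ∨ ∃ i, ψ = b i := by
  classical
  constructor
  · intro h
    set c := b.repr ψ with hc
    have hψ : ψ = ∑ i, c i • b i := (b.sum_repr ψ).symm
    have hδψ : δ ψ = ∑ i, c i • (b i ⊗ₜ[ℂ] b i) := by
      conv_lhs => rw [hψ]
      rw [map_sum]
      simp [hδ]
    have key : ∀ i j, (if j = i then c j else 0) = c j * c i := by
      intro i j
      have h2 := congrArg (fun x => (Module.Basis.tensorProduct b b).repr x (i, j)) h
      simp only [hδψ, map_sum, Finsupp.coe_finset_sum, Finset.sum_apply,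
        map_smul, Finsupp.smul_apply, Module.Basis.tensorProduct_repr_tmul_apply,
        Module.Basis.repr_self, Finsupp.single_apply, smul_eq_mul, mul_ite, ite_mul,
        mul_one, mul_zero, one_mul, zero_mul] at h2
      rw [← h2, Finset.sum_ite_eq' Finset.univ i]
      by_cases hij : j = i
      · subst hij; simp
      · simp [hij, Ne.symm hij]
    by_cases hz : ∀ i, c i = 0
    · left
      rw [hψ]
      simp [hz]
    · right
      push_neg at hz
      obtain ⟨i, hi⟩ := hz
      have hci : c i = 1 := by
        have h3 := key i i
        rw [if_pos rfl] at h3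
        have : c i * 1 = c i * c i := by rw [mul_one]; exact h3
        exact (mul_left_cancel₀ hi this).symm
      refine ⟨i, ?_⟩
      rw [hψ, Finset.sum_eq_single i]
      · rw [hci, one_smul]
      · intro j _ hj
        have h4 := key i j
        rw [if_neg hj] at h4
        rcases mul_eq_zero.mp h4.symm with h1 | h1
        · rw [h1, zero_smul]
        · exact absurd h1 hi
      · intro hin; exact absurd (Finset.mem_univ i) hin
  · rintro (rfl | ⟨i, rfl⟩)
    · simp
    · exact hδ i
end
end

section
/- Define N(α) to be the operator norm of the right action R_α : H → H. Then N(α) = 0 if and only if α = 0, and N satisfies the C*-identity: for all α ∈ H, N(m(α ⊗ α')) = N(α)². Hence the algebra (H, m, u) with involution α ↦ α' carries a C*-algebra norm. -/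
noncomputable section

open scoped TensorProduct ComplexConjugate InnerProductSpace

open scoped TensorProduct ComplexConjugate InnerProductSpace

variable {H : Type*} [NormedAddCommGroup H] [InnerProductSpace ℂ H] [FiniteDimensional ℂ H]

/-- `(H, m, u)` is a commutative †-Frobenius monoid: `m` is associative and commutative,
`u 1` is a two-sided unit for `m`, and the Frobenius law
`(m ⊗ id) ∘ (id ⊗ δ) = δ ∘ m` holds, where `δ := m†`. -/
def IsFrobenius (m : H ⊗[ℂ] H →ₗ[ℂ] H) (u : ℂ →ₗ[ℂ] H) : Prop :=
  (m ∘ₗ TensorProduct.map m LinearMap.id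
      = m ∘ₗ TensorProduct.map LinearMap.id m ∘ₗ (TensorProduct.assoc ℂ H H H).toLinearMap)
    ∧ (m ∘ₗ (TensorProduct.comm ℂ H H).toLinearMap = m)
    ∧ (∀ x : H, m (u 1 ⊗ₜ[ℂ] x) = x)
    ∧ (∀ x : H, m (x ⊗ₜ[ℂ] u 1) = x)
    ∧ (TensorProduct.map m LinearMap.id ∘ₗ (TensorProduct.assoc ℂ H H H).symm.toLinearMap
        ∘ₗ TensorProduct.map LinearMap.id (LinearMap.adjoint m)
      = LinearMap.adjoint m ∘ₗ m)

/-- `ψ` is a copyable element: `δ ψ = ψ ⊗ ψ` and `ε ψ = 1`, where `δ := m†`, `ε := u†`. -/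
def Copyable (m : H ⊗[ℂ] H →ₗ[ℂ] H) (u : ℂ →ₗ[ℂ] H) (ψ : H) : Prop :=
  LinearMap.adjoint m ψ = ψ ⊗ₜ[ℂ] ψ ∧ LinearMap.adjoint u ψ = 1

/-- The right action `R_α : H → H`, `x ↦ m (x ⊗ α)`. -/
def rightAction (m : H ⊗[ℂ] H →ₗ[ℂ] H) (α : H) : H →ₗ[ℂ] H :=
  m ∘ₗ (TensorProduct.mk ℂ H H).flip α

/-- The element `α' := (id_H ⊗ α†) (δ (u 1))`, under the identification `H ⊗ ℂ ≃ H`,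
where `α† : H → ℂ` is `x ↦ ⟪α, x⟫` and `δ := m†`. -/
def conjElem (m : H ⊗[ℂ] H →ₗ[ℂ] H) (u : ℂ →ₗ[ℂ] H) (α : H) : H :=
  TensorProduct.rid ℂ H
    ((TensorProduct.map LinearMap.id (innerₛₗ ℂ α)) (LinearMap.adjoint m (u 1)))

set_option synthInstance.maxHeartbeats 1000000 in
/-- The operator norm `N α := ‖R_α‖` vanishes only at `0` and satisfies the C*-identity
`N (m (α ⊗ α')) = N α ^ 2`; hence `(H, m, u)` with involution `α ↦ α'` carries a
C*-algebra norm. -/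
theorem rightAction_opNorm_cstar (m : H ⊗[ℂ] H →ₗ[ℂ] H) (u : ℂ →ₗ[ℂ] H)
    (hfrob : IsFrobenius m u) :
    (∀ α : H, ‖LinearMap.toContinuousLinearMap (rightAction m α)‖ = 0 ↔ α = 0)
      ∧ (∀ α : H, ‖LinearMap.toContinuousLinearMap (rightAction m (m (α ⊗ₜ[ℂ] conjElem m u α)))‖
          = ‖LinearMap.toContinuousLinearMap (rightAction m α)‖ ^ 2) := by
  obtain ⟨hassoc, hcomm, hlu, hru, hfro⟩ := hfrob
  -- (★): δ z = (m ⊗ id)(assoc⁻¹ (z ⊗ δ(u 1)))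
  have hstar : ∀ z : H, LinearMap.adjoint m z
      = (TensorProduct.map m LinearMap.id)
          ((TensorProduct.assoc ℂ H H H).symm (z ⊗ₜ[ℂ] LinearMap.adjoint m (u 1))) := by
    intro z
    have h := congrArg (fun f : H ⊗[ℂ] H →ₗ[ℂ] H ⊗[ℂ] H => f (z ⊗ₜ[ℂ] u 1)) hfro
    simpa [hru z] using h.symm
  -- adjoint of right action is right action by conjElem
  have hadj : ∀ α : H,
      LinearMap.adjoint (rightAction m α) = rightAction m (conjElem m u α) := by
    intro α
    symm
    rw [LinearMap.eq_adjoint_iff]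
    intro x y
    have key : ∀ t : H ⊗[ℂ] H,
        ⟪m (x ⊗ₜ[ℂ] (TensorProduct.rid ℂ H
            ((TensorProduct.map LinearMap.id (innerₛₗ ℂ α)) t))), y⟫_ℂ
          = @inner ℂ (H ⊗[ℂ] H) InnerProductSpace.toInner ((TensorProduct.map m LinearMap.id)
              ((TensorProduct.assoc ℂ H H H).symm (x ⊗ₜ[ℂ] t))) (y ⊗ₜ[ℂ] α) := by
      intro t
      induction t using TensorProduct.induction_on with
      | zero => simp
      | tmul a b =>
          rw [TensorProduct.map_tmul, TensorProduct.rid_tmul, TensorProduct.assoc_symm_tmul,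
            TensorProduct.map_tmul, TensorIP.inner_tmul, TensorProduct.tmul_smul, map_smul,
            inner_smul_left]
          simp only [LinearMap.id_coe, id_eq, innerₛₗ_apply_apply, inner_conj_symm]
          ring
      | add s t hs ht =>
          simp only [map_add, TensorProduct.tmul_add, inner_add_left, hs, ht]
    have hx : ⟪x, rightAction m α y⟫_ℂ
        = @inner ℂ (H ⊗[ℂ] H) InnerProductSpace.toInner (LinearMap.adjoint m x) (y ⊗ₜ[ℂ] α) := by
      rw [LinearMap.adjoint_inner_left]
      rfl
    rw [hx, hstar x]
    exact key (LinearMap.adjoint m (u 1))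
  -- multiplicativity: R_{m(α⊗β)} = R_β ∘ R_α
  have hmul : ∀ α β : H,
      rightAction m (m (α ⊗ₜ[ℂ] β)) = rightAction m β ∘ₗ rightAction m α := by
    intro α β
    ext x
    have h := congrArg (fun f : (H ⊗[ℂ] H) ⊗[ℂ] H →ₗ[ℂ] H => f ((x ⊗ₜ[ℂ] α) ⊗ₜ[ℂ] β)) hassoc
    simp only [LinearMap.comp_apply, TensorProduct.map_tmul, LinearEquiv.coe_coe,
      TensorProduct.assoc_tmul, LinearMap.id_coe, id_eq] at h
    simpa [rightAction] using h.symm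
  have hRapp : ∀ (α x : H), rightAction m α x = m (x ⊗ₜ[ℂ] α) := fun α x => rfl
  constructor
  · intro α
    constructor
    · intro h
      have h0 : LinearMap.toContinuousLinearMap (rightAction m α) = 0 := norm_eq_zero.mp h
      have h1 : rightAction m α = 0 := by
        ext x
        have := congrArg (fun f : H →L[ℂ] H => f x) h0
        simpa using this
      have h2 : rightAction m α (u 1) = α := by rw [hRapp, hlu]
      rw [h1] at h2
      simpa using h2.symm
    · rintro rfl
      have h1 : rightAction m (0 : H) = 0 := by
        ext x
        rw [hRapp]
        simp
      rw [h1]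
      simp
  · intro α
    set A := LinearMap.toContinuousLinearMap (rightAction m α) with hA
    have hcomp : LinearMap.toContinuousLinearMap
        (rightAction m (m (α ⊗ₜ[ℂ] conjElem m u α)))
        = LinearMap.toContinuousLinearMap (rightAction m (conjElem m u α)) * A := by
      rw [hmul]
      ext x
      rfl
    have hadjc : LinearMap.toContinuousLinearMap (rightAction m (conjElem m u α))
        = star A := by
      rw [← hadj α, ContinuousLinearMap.star_eq_adjoint, hA,
        LinearMap.adjoint_toContinuousLinearMap]
    rw [hcomp, hadjc, CStarRing.norm_star_mul_self, sq]
end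
end

section
/- The set of copyable elements of a commutative †-Frobenius monoid (H, m, u) is a basis of H: the copyable elements are linearly independent and span H. -/
noncomputable section

open scoped TensorProduct ComplexConjugate InnerProductSpace

open scoped TensorProduct ComplexConjugate InnerProductSpace

variable {H : Type*} [NormedAddCommGroup H] [InnerProductSpace ℂ H] [FiniteDimensional ℂ H]

namespace FrobAux

instance instInnerTensor : Inner ℂ (H ⊗[ℂ] H) := InnerProductSpace.toInner

open TensorProduct

variable {m : H ⊗[ℂ] H →ₗ[ℂ] H} {u : ℂ →ₗ[ℂ] H} {S : Finset (H × H)}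

lemma mcomm (hfr : IsFrobenius m u) (a b : H) : m (a ⊗ₜ[ℂ] b) = m (b ⊗ₜ[ℂ] a) := by
  simpa using LinearMap.congr_fun hfr.2.1 (b ⊗ₜ[ℂ] a)

lemma massoc (hfr : IsFrobenius m u) (a b c : H) :
    m (m (a ⊗ₜ[ℂ] b) ⊗ₜ[ℂ] c) = m (a ⊗ₜ[ℂ] m (b ⊗ₜ[ℂ] c)) := by
  simpa using LinearMap.congr_fun hfr.1 ((a ⊗ₜ[ℂ] b) ⊗ₜ[ℂ] c)

lemma inner_ext_tmul {x y : H ⊗[ℂ] H}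
    (h : ∀ a b : H, ⟪a ⊗ₜ[ℂ] b, x⟫_ℂ = ⟪a ⊗ₜ[ℂ] b, y⟫_ℂ) : x = y := by
  have key : ∀ z : H ⊗[ℂ] H, z ∈ (⊤ : Submodule ℂ (H ⊗[ℂ] H)) → ⟪z, x - y⟫_ℂ = 0 := by
    rw [← TensorProduct.span_tmul_eq_top ℂ H H]
    intro z hz
    induction hz using Submodule.span_induction with
    | mem z hz => obtain ⟨a, b, rfl⟩ := hz; rw [inner_sub_right, h, sub_self]
    | zero => simp
    | add z w _ _ hz hw => rw [inner_add_left, hz, hw, add_zero]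
    | smul c z _ hz => rw [inner_smul_left, hz, mul_zero]
  have h0 := key (x - y) Submodule.mem_top
  rw [inner_self_eq_zero, sub_eq_zero] at h0
  exact h0

lemma comm_inner (a b : H) (z : H ⊗[ℂ] H) :
    ⟪a ⊗ₜ[ℂ] b, (TensorProduct.comm ℂ H H) z⟫_ℂ = ⟪b ⊗ₜ[ℂ] a, z⟫_ℂ := by
  induction z using TensorProduct.induction_on with
  | zero => simp
  | tmul x y => rw [TensorProduct.comm_tmul, TensorIP.inner_tmul, TensorIP.inner_tmul, mul_comm]
  | add z w hz hw => rw [map_add, inner_add_right, inner_add_right, hz, hw]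

lemma delta_eq (hfr : IsFrobenius m u)
    (hS : LinearMap.adjoint m (u 1) = ∑ p ∈ S, p.1 ⊗ₜ[ℂ] p.2) (y : H) :
    LinearMap.adjoint m y = ∑ p ∈ S, m (y ⊗ₜ[ℂ] p.1) ⊗ₜ[ℂ] p.2 := by
  have h := LinearMap.congr_fun hfr.2.2.2.2 (y ⊗ₜ[ℂ] u 1)
  simp only [LinearMap.comp_apply, TensorProduct.map_tmul, LinearMap.id_apply,
    LinearEquiv.coe_coe] at h
  rw [hS, TensorProduct.tmul_sum, map_sum, map_sum, hfr.2.2.2.1 y] at h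
  rw [← h]
  refine Finset.sum_congr rfl fun p _ => ?_
  rw [TensorProduct.assoc_symm_tmul, TensorProduct.map_tmul, LinearMap.id_apply]

lemma comm_delta (hfr : IsFrobenius m u) (y : H) :
    (TensorProduct.comm ℂ H H) (LinearMap.adjoint m y) = LinearMap.adjoint m y := by
  apply inner_ext_tmul
  intro a b
  rw [comm_inner, LinearMap.adjoint_inner_right, LinearMap.adjoint_inner_right, mcomm hfr b a]

lemma delta_eq' (hfr : IsFrobenius m u)
    (hS : LinearMap.adjoint m (u 1) = ∑ p ∈ S, p.1 ⊗ₜ[ℂ] p.2) (y : H) :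
    LinearMap.adjoint m y = ∑ p ∈ S, p.2 ⊗ₜ[ℂ] m (y ⊗ₜ[ℂ] p.1) := by
  conv_lhs => rw [← comm_delta hfr y, delta_eq hfr hS y]
  rw [map_sum]
  exact Finset.sum_congr rfl fun p _ => TensorProduct.comm_tmul ℂ H H _ _

/-- The `star` (antilinear involution) associated to the Frobenius structure. -/
def fstar (S : Finset (H × H)) (a : H) : H := ∑ p ∈ S, ⟪a, p.2⟫_ℂ • p.1

lemma fstar_add (S : Finset (H × H)) (a a' : H) :
    fstar S (a + a') = fstar S a + fstar S a' := by
  simp [fstar, inner_add_left, add_smul, Finset.sum_add_distrib]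

lemma fstar_sub (S : Finset (H × H)) (a a' : H) :
    fstar S (a - a') = fstar S a - fstar S a' := by
  simp [fstar, inner_sub_left, sub_smul, Finset.sum_sub_distrib]

lemma fstar_smul (S : Finset (H × H)) (c : ℂ) (a : H) :
    fstar S (c • a) = (starRingEnd ℂ) c • fstar S a := by
  simp [fstar, inner_smul_left, mul_smul, Finset.smul_sum]
  exact Finset.sum_congr rfl fun p _ => smul_comm _ _ _

lemma mul_inner (hfr : IsFrobenius m u)
    (hS : LinearMap.adjoint m (u 1) = ∑ p ∈ S, p.1 ⊗ₜ[ℂ] p.2) (a x y : H) :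
    ⟪m (a ⊗ₜ[ℂ] x), y⟫_ℂ = ⟪x, m (fstar S a ⊗ₜ[ℂ] y)⟫_ℂ := by
  rw [← LinearMap.adjoint_inner_right, delta_eq' hfr hS y, inner_sum]
  simp only [TensorIP.inner_tmul]
  rw [mcomm hfr (fstar S a) y]
  have hexp : m (y ⊗ₜ[ℂ] fstar S a) = ∑ p ∈ S, ⟪a, p.2⟫_ℂ • m (y ⊗ₜ[ℂ] p.1) := by
    rw [fstar, TensorProduct.tmul_sum, map_sum]
    exact Finset.sum_congr rfl fun p _ => by rw [TensorProduct.tmul_smul, map_smul]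
  rw [hexp, inner_sum]
  exact Finset.sum_congr rfl fun p _ => by rw [inner_smul_right]

/-- Left multiplication operator. -/
def Mull (m : H ⊗[ℂ] H →ₗ[ℂ] H) (a : H) : H →ₗ[ℂ] H := m ∘ₗ TensorProduct.mk ℂ H H a

@[simp] lemma Mull_apply (a x : H) : Mull m a x = m (a ⊗ₜ[ℂ] x) := rfl

lemma adjoint_Mull (hfr : IsFrobenius m u)
    (hS : LinearMap.adjoint m (u 1) = ∑ p ∈ S, p.1 ⊗ₜ[ℂ] p.2) (a : H) :
    LinearMap.adjoint (Mull m a) = Mull m (fstar S a) := by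
  refine ((LinearMap.eq_adjoint_iff _ _).mpr fun x y => ?_).symm
  simp only [Mull_apply]
  calc ⟪m (fstar S a ⊗ₜ[ℂ] x), y⟫_ℂ
      = (starRingEnd ℂ) ⟪y, m (fstar S a ⊗ₜ[ℂ] x)⟫_ℂ := (inner_conj_symm _ _).symm
    _ = (starRingEnd ℂ) ⟪m (a ⊗ₜ[ℂ] y), x⟫_ℂ := by rw [mul_inner hfr hS]
    _ = ⟪x, m (a ⊗ₜ[ℂ] y)⟫_ℂ := inner_conj_symm _ _

lemma fstar_fstar (hfr : IsFrobenius m u)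
    (hS : LinearMap.adjoint m (u 1) = ∑ p ∈ S, p.1 ⊗ₜ[ℂ] p.2) (a : H) :
    fstar S (fstar S a) = a := by
  have h : Mull m (fstar S (fstar S a)) = Mull m a := by
    rw [← adjoint_Mull hfr hS, ← adjoint_Mull hfr hS, LinearMap.adjoint_adjoint]
  have h2 := LinearMap.congr_fun h (u 1)
  simpa [hfr.2.2.2.1] using h2

lemma isSymmetric_Mull (hfr : IsFrobenius m u)
    (hS : LinearMap.adjoint m (u 1) = ∑ p ∈ S, p.1 ⊗ₜ[ℂ] p.2) {c : H}
    (hc : fstar S c = c) : (Mull m c).IsSymmetric := by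
  intro x y
  simp only [Mull_apply]
  rw [mul_inner hfr hS, hc]

lemma commute_Mull (hfr : IsFrobenius m u) (a b : H) : Commute (Mull m a) (Mull m b) := by
  apply LinearMap.ext
  intro x
  simp only [Module.End.mul_apply, Mull_apply]
  calc m (a ⊗ₜ[ℂ] m (b ⊗ₜ[ℂ] x)) = m (m (a ⊗ₜ[ℂ] b) ⊗ₜ[ℂ] x) := (massoc hfr a b x).symm
    _ = m (m (b ⊗ₜ[ℂ] a) ⊗ₜ[ℂ] x) := by rw [mcomm hfr a b]
    _ = m (b ⊗ₜ[ℂ] m (a ⊗ₜ[ℂ] x)) := massoc hfr b a x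

lemma copyable_of_char (hfr : IsFrobenius m u) (lam : H →ₗ[ℂ] ℂ)
    (hmul : ∀ a b : H, lam (m (a ⊗ₜ[ℂ] b)) = lam a * lam b) (hone : lam (u 1) = 1) :
    ∃ ψ : H, Copyable m u ψ ∧ ∀ a : H, ⟪ψ, a⟫_ℂ = lam a := by
  set ψ := (InnerProductSpace.toDual ℂ H).symm (LinearMap.toContinuousLinearMap lam) with hψdef
  have hψ : ∀ a : H, ⟪ψ, a⟫_ℂ = lam a := fun a => InnerProductSpace.toDual_symm_apply
  refine ⟨ψ, ⟨?_, ?_⟩, hψ⟩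
  · apply inner_ext_tmul
    intro a b
    calc ⟪a ⊗ₜ[ℂ] b, LinearMap.adjoint m ψ⟫_ℂ
        = ⟪m (a ⊗ₜ[ℂ] b), ψ⟫_ℂ := LinearMap.adjoint_inner_right _ _ _
      _ = (starRingEnd ℂ) ⟪ψ, m (a ⊗ₜ[ℂ] b)⟫_ℂ := (inner_conj_symm _ _).symm
      _ = (starRingEnd ℂ) (lam a * lam b) := by rw [hψ, hmul]
      _ = ⟪a, ψ⟫_ℂ * ⟪b, ψ⟫_ℂ := by
          rw [map_mul, ← hψ a, ← hψ b, inner_conj_symm, inner_conj_symm]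
      _ = ⟪a ⊗ₜ[ℂ] b, ψ ⊗ₜ[ℂ] ψ⟫_ℂ := (TensorIP.inner_tmul a b ψ ψ).symm
  · have h1 : ⟪(1 : ℂ), LinearMap.adjoint u ψ⟫_ℂ = ⟪u 1, ψ⟫_ℂ :=
      LinearMap.adjoint_inner_right u _ _
    have h2 : ⟪u 1, ψ⟫_ℂ = (starRingEnd ℂ) (lam (u 1)) := by rw [← hψ, inner_conj_symm]
    rw [h2, hone, map_one] at h1
    simpa [RCLike.inner_apply] using h1

/-- The monoid structure on `H` given by `m` and `u`. -/
def frobMonoid (hfr : IsFrobenius m u) : Monoid H where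
  mul a b := m (a ⊗ₜ[ℂ] b)
  one := u 1
  mul_assoc a b c := massoc hfr a b c
  one_mul := hfr.2.2.1
  mul_one := hfr.2.2.2.1

end FrobAux
/-- The copyable elements of a commutative †-Frobenius monoid form a basis of `H`:
they are linearly independent and span `H`. -/
theorem copyable_basis (m : H ⊗[ℂ] H →ₗ[ℂ] H) (u : ℂ →ₗ[ℂ] H)
    (hfrob : IsFrobenius m u) :
    LinearIndependent ℂ ((↑) : {ψ : H // Copyable m u ψ} → H)
      ∧ Submodule.span ℂ {ψ : H | Copyable m u ψ} = ⊤ := by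
  classical
  constructor
  · -- Linear independence, via Dedekind's independence of characters.
    letI mon : Monoid H := FrobAux.frobMonoid hfrob
    let χ : {ψ : H // Copyable m u ψ} → (H →* ℂ) := fun ψ =>
      { toFun := fun x => ⟪(ψ : H), x⟫_ℂ
        map_one' := by
          show ⟪(ψ : H), u 1⟫_ℂ = 1
          have h1 : ⟪(1 : ℂ), LinearMap.adjoint u (ψ : H)⟫_ℂ = ⟪u 1, (ψ : H)⟫_ℂ :=
            LinearMap.adjoint_inner_right u _ _
          rw [ψ.2.2] at h1
          rw [← inner_conj_symm, ← h1]
          simp [RCLike.inner_apply]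
        map_mul' := fun a b => by
          show ⟪(ψ : H), m (a ⊗ₜ[ℂ] b)⟫_ℂ = ⟪(ψ : H), a⟫_ℂ * ⟪(ψ : H), b⟫_ℂ
          rw [← LinearMap.adjoint_inner_left, ψ.2.1, TensorIP.inner_tmul] }
    have hinj : Function.Injective χ := by
      intro ψ1 ψ2 hh
      apply Subtype.ext
      exact ext_inner_right ℂ fun v => DFunLike.congr_fun hh v
    have hli := (linearIndependent_monoidHom H ℂ).comp χ hinj
    rw [linearIndependent_iff']
    intro s g hsum i hi
    have h0 : (∑ j ∈ s, (starRingEnd ℂ) (g j) • ((fun f : H →* ℂ => (f : H → ℂ)) ∘ χ) j)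
        = 0 := by
      funext x
      have hz : ⟪∑ j ∈ s, g j • (j : H), x⟫_ℂ = 0 := by rw [hsum, inner_zero_left]
      rw [sum_inner] at hz
      simp only [inner_smul_left] at hz
      simpa [χ, Function.comp, Finset.sum_apply] using hz
    have hzero := linearIndependent_iff'.mp hli s (fun j => (starRingEnd ℂ) (g j)) h0 i hi
    simpa using hzero
  · -- Spanning, via simultaneous diagonalization of the commuting symmetric
    -- multiplication operators.
    refine Submodule.orthogonal_eq_bot_iff.mp ?_
    rw [Submodule.eq_bot_iff]
    intro x hx
    obtain ⟨S, hS⟩ := TensorProduct.exists_finset (LinearMap.adjoint m (u 1))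
    set b : Module.Basis (Fin (Module.finrank ℂ H)) ℂ H := Module.finBasis ℂ H with hb
    set cv : Fin (Module.finrank ℂ H) × Bool → H := fun i =>
      cond i.2 (Complex.I • (b i.1 - FrobAux.fstar S (b i.1)))
        (b i.1 + FrobAux.fstar S (b i.1)) with hcv
    set T : Fin (Module.finrank ℂ H) × Bool → (H →ₗ[ℂ] H) :=
      fun i => FrobAux.Mull m (cv i) with hT
    have hcvf : ∀ i, cv (i, false) = b i + FrobAux.fstar S (b i) := fun i => rfl
    have hcvt : ∀ i, cv (i, true) = Complex.I • (b i - FrobAux.fstar S (b i)) := fun i => rfl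
    have hsymm : ∀ i, (T i).IsSymmetric := by
      intro i
      apply FrobAux.isSymmetric_Mull hfrob hS
      rcases i with ⟨i, bo⟩
      cases bo
      · rw [hcvf, FrobAux.fstar_add, FrobAux.fstar_fstar hfrob hS, add_comm]
      · rw [hcvt, FrobAux.fstar_smul, FrobAux.fstar_sub, FrobAux.fstar_fstar hfrob hS,
          Complex.conj_I, neg_smul, ← smul_neg, neg_sub]
    have hpair : Pairwise (Function.onFun Commute T) := fun i j _ => FrobAux.commute_Mull hfrob _ _
    have htop := LinearMap.IsSymmetric.iSup_iInf_eq_top_of_commute hsymm hpair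
    have hker : ∀ γ : Fin (Module.finrank ℂ H) × Bool → ℂ,
        (⨅ i, Module.End.eigenspace (T i) (γ i)) ≤ LinearMap.ker (FrobAux.Mull m x) := by
      intro γ
      set mu : Fin (Module.finrank ℂ H) → ℂ :=
        fun i => 2⁻¹ * (γ (i, false) + -Complex.I * γ (i, true)) with hmu
      set lam : H →ₗ[ℂ] ℂ := b.constr ℂ mu with hlam
      have heig : ∀ w ∈ (⨅ i, Module.End.eigenspace (T i) (γ i)), ∀ a : H,
          m (a ⊗ₜ[ℂ] w) = lam a • w := by
        intro w hw
        have hwE : ∀ i, w ∈ Module.End.eigenspace (T i) (γ i) :=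
          (Submodule.mem_iInf _).mp hw
        have hbase : ∀ i, m (b i ⊗ₜ[ℂ] w) = mu i • w := by
          intro i
          have h1 : m (cv (i, false) ⊗ₜ[ℂ] w) = γ (i, false) • w :=
            Module.End.mem_eigenspace_iff.mp (hwE (i, false))
          have h2 : m (cv (i, true) ⊗ₜ[ℂ] w) = γ (i, true) • w :=
            Module.End.mem_eigenspace_iff.mp (hwE (i, true))
          rw [hcvf, TensorProduct.add_tmul, map_add] at h1
          rw [hcvt, ← TensorProduct.smul_tmul', map_smul, TensorProduct.sub_tmul, map_sub] at h2
          have e3 : m (b i ⊗ₜ[ℂ] w) - m (FrobAux.fstar S (b i) ⊗ₜ[ℂ] w)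
              = (-Complex.I * γ (i, true)) • w := by
            have h3 := congrArg (fun z => (-Complex.I) • z) h2
            simp only [smul_smul] at h3
            rw [neg_mul, Complex.I_mul_I, neg_neg, one_smul] at h3
            exact h3
          have e4 : (2 : ℂ) • m (b i ⊗ₜ[ℂ] w)
              = (γ (i, false) + -Complex.I * γ (i, true)) • w := by
            have h4 : (m (b i ⊗ₜ[ℂ] w) + m (FrobAux.fstar S (b i) ⊗ₜ[ℂ] w))
                + (m (b i ⊗ₜ[ℂ] w) - m (FrobAux.fstar S (b i) ⊗ₜ[ℂ] w))
                = γ (i, false) • w + (-Complex.I * γ (i, true)) • w := by rw [h1, e3]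
            rw [← add_smul] at h4
            rw [two_smul, ← h4]
            abel
          have e5 : m (b i ⊗ₜ[ℂ] w) = (2⁻¹ : ℂ) • ((2 : ℂ) • m (b i ⊗ₜ[ℂ] w)) := by
            rw [smul_smul]
            norm_num
          rw [e5, e4, smul_smul, hmu]
        intro a
        conv_lhs => rw [← b.sum_repr a]
        rw [TensorProduct.sum_tmul, map_sum]
        have hterm : ∀ i ∈ Finset.univ, m ((b.repr a i • b i) ⊗ₜ[ℂ] w)
            = (b.repr a i * mu i) • w := by
          intro i _
          rw [← TensorProduct.smul_tmul', map_smul, hbase i, smul_smul]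
        rw [Finset.sum_congr rfl hterm, ← Finset.sum_smul]
        congr 1
        rw [hlam, Module.Basis.constr_apply_fintype]
        simp [Module.Basis.equivFun_apply, smul_eq_mul]
      rcases eq_or_ne (⨅ i, Module.End.eigenspace (T i) (γ i)) ⊥ with hE0 | hE0
      · rw [hE0]; exact bot_le
      · obtain ⟨v, hv, hv0⟩ := Submodule.ne_bot_iff _ |>.mp hE0
        have hmul : ∀ a a' : H, lam (m (a ⊗ₜ[ℂ] a')) = lam a * lam a' := by
          intro a a'
          have h5 : m (m (a ⊗ₜ[ℂ] a') ⊗ₜ[ℂ] v) = lam (m (a ⊗ₜ[ℂ] a')) • v := heig v hv _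
          have h6 : m (m (a ⊗ₜ[ℂ] a') ⊗ₜ[ℂ] v) = (lam a * lam a') • v := by
            rw [FrobAux.massoc hfrob, heig v hv a', TensorProduct.tmul_smul, map_smul,
              heig v hv a, smul_smul, mul_comm]
          exact smul_left_injective ℂ hv0 (h5.symm.trans h6)
        have hone : lam (u 1) = 1 := by
          have h5 : m (u 1 ⊗ₜ[ℂ] v) = lam (u 1) • v := heig v hv _
          rw [hfrob.2.2.1 v] at h5
          exact smul_left_injective ℂ hv0 (show lam (u 1) • v = (1:ℂ) • v by rw [one_smul, ← h5])
        obtain ⟨ψ, hψcop, hψ⟩ := FrobAux.copyable_of_char hfrob lam hmul hone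
        have hlamx : lam x = 0 := by
          rw [← hψ]
          exact (Submodule.mem_orthogonal _ x).mp hx ψ (Submodule.subset_span hψcop)
        intro w hw
        rw [LinearMap.mem_ker, FrobAux.Mull_apply, heig w hw x, hlamx, zero_smul]
    have hkertop : LinearMap.ker (FrobAux.Mull m x) = ⊤ := by
      rw [← top_le_iff, ← htop]
      exact iSup_le hker
    have hx0 := LinearMap.congr_fun (LinearMap.ker_eq_top.mp hkertop) (u 1)
    simpa [hfrob.2.2.2.1 x] using hx0
end
end

section
/- A commutative †-Frobenius monoid on H is determined by its copyable elements: if (m₁, u₁) and (m₂, u₂) are commutative †-Frobenius monoids on H whose sets of copyable elements coincide, then m₁ = m₂ and u₁ = u₂. -/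
noncomputable section

open scoped TensorProduct ComplexConjugate InnerProductSpace

open scoped TensorProduct ComplexConjugate InnerProductSpace

variable {H : Type*} [NormedAddCommGroup H] [InnerProductSpace ℂ H] [FiniteDimensional ℂ H]

section FrobAux

variable (m : H ⊗[ℂ] H →ₗ[ℂ] H) (u : ℂ →ₗ[ℂ] H)

/-- Left multiplication operator. -/
def Lmul (a : H) : H →ₗ[ℂ] H := m ∘ₗ TensorProduct.mk ℂ H H a

@[simp] lemma Lmul_apply (a b : H) : Lmul m a b = m (a ⊗ₜ[ℂ] b) := rfl

variable {m u}

lemma adjoint_id' : LinearMap.adjoint (LinearMap.id : H →ₗ[ℂ] H) = LinearMap.id := by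
  rw [eq_comm, LinearMap.eq_adjoint_iff]; intro x y; simp

lemma frob_mul_comm' (hf : IsFrobenius m u) (a b : H) : m (a ⊗ₜ[ℂ] b) = m (b ⊗ₜ[ℂ] a) := by
  have := LinearMap.congr_fun hf.2.1 (b ⊗ₜ[ℂ] a)
  simpa using this

lemma Lmul_mul (hf : IsFrobenius m u) (a b : H) :
    Lmul m (m (a ⊗ₜ[ℂ] b)) = Lmul m a ∘ₗ Lmul m b := by
  ext c
  have := LinearMap.congr_fun hf.1 ((a ⊗ₜ[ℂ] b) ⊗ₜ[ℂ] c)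
  simpa using this

lemma Lmul_commute (hf : IsFrobenius m u) (a b : H) :
    Commute (Lmul m a) (Lmul m b) := by
  have h1 := Lmul_mul hf a b
  have h2 := Lmul_mul hf b a
  rw [frob_mul_comm' hf a b] at h1
  show Lmul m a * Lmul m b = Lmul m b * Lmul m a
  rw [Module.End.mul_eq_comp, Module.End.mul_eq_comp, ← h1, ← h2]

lemma Lmul_one (hf : IsFrobenius m u) : Lmul m (u 1) = LinearMap.id := by
  ext c; simpa using hf.2.2.1 c

lemma adjoint_tmap (f g : H →ₗ[ℂ] H) :
    LinearMap.adjoint (TensorProduct.map f g)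
      = TensorProduct.map (LinearMap.adjoint f) (LinearMap.adjoint g) := by
  rw [eq_comm, LinearMap.eq_adjoint_iff]
  intro x y
  induction x using TensorProduct.induction_on with
  | zero => simp
  | tmul a b =>
    induction y using TensorProduct.induction_on with
    | zero => simp
    | tmul c d =>
      simp [TensorIP.inner_tmul, LinearMap.adjoint_inner_left]
    | add y₁ y₂ hy₁ hy₂ => rw [map_add, inner_add_right, inner_add_right, hy₁, hy₂]
  | add x₁ x₂ hx₁ hx₂ => rw [map_add, inner_add_left, inner_add_left, hx₁, hx₂]

lemma adjoint_tcomm :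
    LinearMap.adjoint (TensorProduct.comm ℂ H H).toLinearMap
      = (TensorProduct.comm ℂ H H).toLinearMap := by
  rw [eq_comm, LinearMap.eq_adjoint_iff]
  intro x y
  induction x using TensorProduct.induction_on with
  | zero => simp
  | tmul a b =>
    induction y using TensorProduct.induction_on with
    | zero => simp
    | tmul c d => simp [TensorIP.inner_tmul, mul_comm]
    | add y₁ y₂ hy₁ hy₂ => rw [map_add, inner_add_right, inner_add_right, hy₁, hy₂]
  | add x₁ x₂ hx₁ hx₂ => rw [map_add, inner_add_left, inner_add_left, hx₁, hx₂]

lemma comm_adjoint_m (hf : IsFrobenius m u) (z : H) :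
    (TensorProduct.comm ℂ H H) (LinearMap.adjoint m z) = LinearMap.adjoint m z := by
  have h : LinearMap.adjoint m
      = (TensorProduct.comm ℂ H H).toLinearMap ∘ₗ LinearMap.adjoint m := by
    conv_lhs => rw [← hf.2.1]
    rw [LinearMap.adjoint_comp, adjoint_tcomm]
  exact (LinearMap.congr_fun h z).symm

lemma tcomm_map (f : H →ₗ[ℂ] H) (t : H ⊗[ℂ] H) :
    (TensorProduct.comm ℂ H H) (TensorProduct.map f LinearMap.id t)
      = TensorProduct.map LinearMap.id f ((TensorProduct.comm ℂ H H) t) := by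
  induction t using TensorProduct.induction_on with
  | zero => simp
  | tmul a b => simp
  | add t₁ t₂ h₁ h₂ => simp [h₁, h₂]

lemma delta_left (hf : IsFrobenius m u) (c : H) :
    LinearMap.adjoint m c
      = TensorProduct.map (Lmul m c) LinearMap.id (LinearMap.adjoint m (u 1)) := by
  have hfr := LinearMap.congr_fun hf.2.2.2.2 (c ⊗ₜ[ℂ] u 1)
  have hkey : ∀ t : H ⊗[ℂ] H,
      TensorProduct.map m LinearMap.id
          ((TensorProduct.assoc ℂ H H H).symm (c ⊗ₜ[ℂ] t))
        = TensorProduct.map (Lmul m c) LinearMap.id t := by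
    intro t
    induction t using TensorProduct.induction_on with
    | zero => simp
    | tmul x y => simp
    | add t₁ t₂ h₁ h₂ => simp [TensorProduct.tmul_add, h₁, h₂]
  simp only [LinearMap.coe_comp, Function.comp_apply, LinearEquiv.coe_coe,
    TensorProduct.map_tmul, LinearMap.id_coe, id_eq] at hfr
  rw [hf.2.2.2.1 c] at hfr
  rw [← hfr, hkey]

lemma delta_right (hf : IsFrobenius m u) (c : H) :
    LinearMap.adjoint m c
      = TensorProduct.map LinearMap.id (Lmul m c) (LinearMap.adjoint m (u 1)) := by
  conv_lhs => rw [← comm_adjoint_m hf c, delta_left hf c, tcomm_map,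
    comm_adjoint_m hf (u 1)]

lemma inner_star_star (hf : IsFrobenius m u) (c w : H) :
    ⟪LinearMap.adjoint (Lmul m w) (u 1), LinearMap.adjoint (Lmul m c) (u 1)⟫_ℂ
      = ⟪c, w⟫_ℂ := by
  rw [LinearMap.adjoint_inner_left]
  have h1 : Lmul m w (LinearMap.adjoint (Lmul m c) (u 1))
      = m (w ⊗ₜ[ℂ] (LinearMap.adjoint (Lmul m c) (u 1))) := rfl
  rw [h1, ← LinearMap.adjoint_inner_left m]
  have h2 : (w ⊗ₜ[ℂ] (LinearMap.adjoint (Lmul m c) (u 1)))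
      = TensorProduct.map LinearMap.id (LinearMap.adjoint (Lmul m c)) (w ⊗ₜ[ℂ] u 1) := by
    simp
  rw [h2, show TensorProduct.map LinearMap.id (LinearMap.adjoint (Lmul m c))
      = LinearMap.adjoint (TensorProduct.map LinearMap.id (Lmul m c)) by
        rw [adjoint_tmap, adjoint_id'],
    LinearMap.adjoint_inner_right, ← delta_right hf c, LinearMap.adjoint_inner_left,
    hf.2.2.2.1 w]

lemma adjoint_Lmul (hf : IsFrobenius m u) (a : H) :
    LinearMap.adjoint (Lmul m a) = Lmul m (LinearMap.adjoint (Lmul m a) (u 1)) := by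
  ext c
  apply ext_inner_right ℂ
  intro b
  rw [LinearMap.adjoint_inner_left]
  have hL : ⟪c, Lmul m a b⟫_ℂ
      = ⟪LinearMap.adjoint (Lmul m (m (a ⊗ₜ[ℂ] b))) (u 1),
          LinearMap.adjoint (Lmul m c) (u 1)⟫_ℂ := (inner_star_star hf c (m (a ⊗ₜ[ℂ] b))).symm
  rw [hL]
  symm
  have e1 : Lmul m (LinearMap.adjoint (Lmul m a) (u 1)) c
      = m (c ⊗ₜ[ℂ] LinearMap.adjoint (Lmul m a) (u 1)) := by
    rw [Lmul_apply, frob_mul_comm' hf]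
  have e2 : TensorProduct.map LinearMap.id (LinearMap.adjoint (Lmul m b))
      (c ⊗ₜ[ℂ] LinearMap.adjoint (Lmul m a) (u 1))
      = c ⊗ₜ[ℂ] LinearMap.adjoint (Lmul m (m (a ⊗ₜ[ℂ] b))) (u 1) := by
    simp only [TensorProduct.map_tmul, LinearMap.id_coe, id_eq]
    congr 1
    rw [Lmul_mul hf, LinearMap.adjoint_comp, LinearMap.comp_apply]
  have step2 := LinearMap.adjoint_inner_left
    (TensorProduct.map LinearMap.id (Lmul m b))
    (LinearMap.adjoint m (u 1)) (c ⊗ₜ[ℂ] LinearMap.adjoint (Lmul m a) (u 1))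
  rw [adjoint_tmap, adjoint_id', e2] at step2
  calc ⟪Lmul m (LinearMap.adjoint (Lmul m a) (u 1)) c, b⟫_ℂ
      = @inner ℂ (H ⊗[ℂ] H) InnerProductSpace.toInner (c ⊗ₜ[ℂ] LinearMap.adjoint (Lmul m a) (u 1)) (LinearMap.adjoint m b) := by
        rw [e1, LinearMap.adjoint_inner_right]
    _ = @inner ℂ (H ⊗[ℂ] H) InnerProductSpace.toInner (c ⊗ₜ[ℂ] LinearMap.adjoint (Lmul m a) (u 1))
          (TensorProduct.map LinearMap.id (Lmul m b)
            (LinearMap.adjoint m (u 1))) := by rw [← delta_right hf b]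
    _ = @inner ℂ (H ⊗[ℂ] H) InnerProductSpace.toInner (c ⊗ₜ[ℂ] LinearMap.adjoint (Lmul m (m (a ⊗ₜ[ℂ] b))) (u 1))
          (LinearMap.adjoint m (u 1)) := step2.symm
    _ = ⟪m (c ⊗ₜ[ℂ] LinearMap.adjoint (Lmul m (m (a ⊗ₜ[ℂ] b))) (u 1)), u 1⟫_ℂ :=
        LinearMap.adjoint_inner_right m _ _
    _ = ⟪LinearMap.adjoint (Lmul m (m (a ⊗ₜ[ℂ] b))) (u 1),
          LinearMap.adjoint (Lmul m c) (u 1)⟫_ℂ := by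
        rw [show m (c ⊗ₜ[ℂ] LinearMap.adjoint (Lmul m (m (a ⊗ₜ[ℂ] b))) (u 1))
            = Lmul m c (LinearMap.adjoint (Lmul m (m (a ⊗ₜ[ℂ] b))) (u 1)) from rfl,
          ← LinearMap.adjoint_inner_right (Lmul m c)]

variable (m) in
/-- The symmetric family: real and imaginary parts of the multiplication operators. -/
def symFam : H × Bool → (H →ₗ[ℂ] H)
  | (a, false) => Lmul m a + LinearMap.adjoint (Lmul m a)
  | (a, true) => Complex.I • (LinearMap.adjoint (Lmul m a) - Lmul m a)

lemma symFam_isSymmetric (i : H × Bool) : (symFam m i).IsSymmetric := by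
  rw [LinearMap.isSymmetric_iff_isSelfAdjoint]
  rcases i with ⟨a, b⟩
  cases b
  · show IsSelfAdjoint (Lmul m a + LinearMap.adjoint (Lmul m a))
    rw [IsSelfAdjoint, star_add, LinearMap.star_eq_adjoint, LinearMap.star_eq_adjoint,
      LinearMap.adjoint_adjoint, add_comm]
  · show IsSelfAdjoint (Complex.I • (LinearMap.adjoint (Lmul m a) - Lmul m a))
    rw [IsSelfAdjoint, star_smul, star_sub, LinearMap.star_eq_adjoint,
      LinearMap.star_eq_adjoint, LinearMap.adjoint_adjoint, RCLike.star_def,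
      Complex.conj_I, neg_smul, ← smul_neg, neg_sub]

lemma symFam_commute (hf : IsFrobenius m u) (i j : H × Bool) :
    Commute (symFam m i) (symFam m j) := by
  rcases i with ⟨a, bi⟩; rcases j with ⟨b, bj⟩
  have c11 := Lmul_commute hf a b
  have c12 : Commute (Lmul m a) (LinearMap.adjoint (Lmul m b)) := by
    rw [adjoint_Lmul hf]; exact Lmul_commute hf _ _
  have c21 : Commute (LinearMap.adjoint (Lmul m a)) (Lmul m b) := by
    rw [adjoint_Lmul hf]; exact Lmul_commute hf _ _
  have c22 : Commute (LinearMap.adjoint (Lmul m a)) (LinearMap.adjoint (Lmul m b)) := by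
    rw [adjoint_Lmul hf a, adjoint_Lmul hf b]; exact Lmul_commute hf _ _
  cases bi <;> cases bj
  · exact (c11.add_right c12).add_left (c21.add_right c22)
  · exact ((c12.sub_right c11).add_left (c22.sub_right c21)).smul_right Complex.I
  · exact ((c21.sub_left c11).add_right (c22.sub_left c12)).smul_left Complex.I
  · exact (((c22.sub_left c12).sub_right (c21.sub_left c11)).smul_left Complex.I).smul_right
      Complex.I

/-- On a joint eigenvector, every left multiplication acts by a scalar. -/
lemma eigen_scalar (hf : IsFrobenius m u) {γ : H × Bool → ℂ} {v : H}
    (hv : v ∈ ⨅ i, Module.End.eigenspace (symFam m i) (γ i)) (x : H) :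
    Lmul m x v = (((γ (x, false)) + Complex.I * (γ (x, true))) / 2) • v := by
  have h0 := (Submodule.mem_iInf _).mp hv (x, false)
  have h1 := (Submodule.mem_iInf _).mp hv (x, true)
  rw [Module.End.mem_eigenspace_iff] at h0 h1
  simp only [symFam, LinearMap.add_apply, LinearMap.smul_apply, LinearMap.sub_apply] at h0 h1
  have h2 : LinearMap.adjoint (Lmul m x) v - Lmul m x v = (-(Complex.I * γ (x, true))) • v := by
    have h1' := congrArg (fun y => (-Complex.I) • y) h1
    simp only [smul_smul, neg_mul, Complex.I_mul_I, neg_neg, one_smul] at h1'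
    rw [← h1']
  have h3 : (2 : ℂ) • Lmul m x v = (γ (x, false) + Complex.I * γ (x, true)) • v := by
    have hsub := congrArg₂ (fun y z => y - z) h0 h2
    rw [← sub_smul] at hsub
    have harr : Lmul m x v + LinearMap.adjoint (Lmul m x) v
        - (LinearMap.adjoint (Lmul m x) v - Lmul m x v) = (2 : ℂ) • Lmul m x v := by
      rw [two_smul]; abel
    rw [harr] at hsub
    rw [hsub]
    congr 1
    ring
  have h4 := congrArg (fun y => (2 : ℂ)⁻¹ • y) h3
  simp only [smul_smul] at h4
  rw [inv_mul_cancel₀ (two_ne_zero), one_smul] at h4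
  rw [h4]
  congr 1
  ring

lemma copyable_inner_mul {ψ : H} (hψ : Copyable m u ψ) (a b : H) :
    ⟪ψ, m (a ⊗ₜ[ℂ] b)⟫_ℂ = ⟪ψ, a⟫_ℂ * ⟪ψ, b⟫_ℂ := by
  rw [← LinearMap.adjoint_inner_left m, hψ.1, TensorIP.inner_tmul]

lemma copyable_inner_unit {ψ : H} (hψ : Copyable m u ψ) : ⟪ψ, u 1⟫_ℂ = 1 := by
  have h := LinearMap.adjoint_inner_right u (1 : ℂ) ψ
  rw [hψ.2] at h
  rw [← inner_conj_symm, ← h]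
  simp [RCLike.inner_apply]

/-- Any vector orthogonal to every copyable element is zero. -/
lemma eq_zero_of_inner_copyable_zero (hf : IsFrobenius m u) (x : H)
    (hx : ∀ ψ : H, Copyable m u ψ → ⟪ψ, x⟫_ℂ = 0) : x = 0 := by
  have hker : LinearMap.ker (Lmul m x) = ⊤ := by
    have htop := LinearMap.IsSymmetric.iSup_iInf_eq_top_of_commute
      (T := symFam m) (fun i => symFam_isSymmetric i)
      (fun i j _ => symFam_commute hf i j)
    rw [eq_top_iff, ← htop]
    refine iSup_le fun γ => ?_
    intro v hv
    rw [LinearMap.mem_ker]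
    by_cases hv0 : v = 0
    · simp [hv0]
    -- construct the character from the joint eigenvector
    set χ : H →ₗ[ℂ] ℂ :=
      (⟪v, v⟫_ℂ)⁻¹ • (((innerSL ℂ v : H →L[ℂ] ℂ) : H →ₗ[ℂ] ℂ) ∘ₗ m
        ∘ₗ (TensorProduct.mk ℂ H H).flip v) with hχdef
    have hvv : ⟪v, v⟫_ℂ ≠ 0 := inner_self_ne_zero.mpr hv0
    have hkey : ∀ y : H, m (y ⊗ₜ[ℂ] v) = χ y • v := by
      intro y
      have h1 : m (y ⊗ₜ[ℂ] v) = Lmul m y v := rfl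
      have h2 := eigen_scalar hf hv y
      have h3 : χ y = ((γ (y, false)) + Complex.I * γ (y, true)) / 2 := by
        rw [hχdef]
        simp only [LinearMap.smul_apply, LinearMap.coe_comp, Function.comp_apply,
          ContinuousLinearMap.coe_coe, TensorProduct.mk_apply, LinearMap.flip_apply,
          innerSL_apply_apply, smul_eq_mul]
        rw [show m (y ⊗ₜ[ℂ] v) = Lmul m y v from rfl, h2]
        rw [inner_smul_right]
        field_simp
      rw [h1, h2, h3]
    have hmul : ∀ a b : H, χ (m (a ⊗ₜ[ℂ] b)) = χ a * χ b := by
      intro a b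
      have e1 : m (m (a ⊗ₜ[ℂ] b) ⊗ₜ[ℂ] v) = χ (m (a ⊗ₜ[ℂ] b)) • v := hkey _
      have e2 : m (m (a ⊗ₜ[ℂ] b) ⊗ₜ[ℂ] v) = (χ a * χ b) • v := by
        have hthis := LinearMap.congr_fun (Lmul_mul hf a b) v
        simp only [Lmul_apply, LinearMap.comp_apply] at hthis
        rw [hthis, hkey b, TensorProduct.tmul_smul, map_smul, hkey a, smul_smul,
          mul_comm (χ b) (χ a)]
      have := e1.symm.trans e2
      exact smul_left_injective ℂ hv0 this
    have hone : χ (u 1) = 1 := by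
      have e1 : m (u 1 ⊗ₜ[ℂ] v) = χ (u 1) • v := hkey _
      rw [hf.2.2.1 v] at e1
      have : (1 : ℂ) • v = χ (u 1) • v := by rw [one_smul]; exact e1
      exact (smul_left_injective ℂ hv0 this).symm
    -- the corresponding copyable vector
    set ψ : H := (InnerProductSpace.toDual ℂ H).symm (LinearMap.toContinuousLinearMap χ)
      with hψdef
    have hψ : ∀ y : H, ⟪ψ, y⟫_ℂ = χ y := by
      intro y
      rw [hψdef, InnerProductSpace.toDual_symm_apply]
      simp
    have hcop : Copyable m u ψ := by
      constructor
      · apply ext_inner_right ℂ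
        intro z
        induction z using TensorProduct.induction_on with
        | zero => simp
        | tmul a b =>
          rw [LinearMap.adjoint_inner_left, TensorIP.inner_tmul, hψ a, hψ b]
          have : m (a ⊗ₜ[ℂ] b) = m (a ⊗ₜ[ℂ] b) := rfl
          rw [show ⟪ψ, m (a ⊗ₜ[ℂ] b)⟫_ℂ = χ (m (a ⊗ₜ[ℂ] b)) from hψ _, hmul]
        | add z₁ z₂ h₁ h₂ => rw [inner_add_right, inner_add_right, h₁, h₂]
      · have h := LinearMap.adjoint_inner_right u (1 : ℂ) ψ
        have h2 : ⟪u 1, ψ⟫_ℂ = 1 := by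
          rw [← inner_conj_symm, hψ (u 1), hone, map_one]
        rw [h2] at h
        simpa [RCLike.inner_apply] using h
    have hx0 : χ x = 0 := by rw [← hψ x]; exact hx ψ hcop
    rw [show Lmul m x v = m (x ⊗ₜ[ℂ] v) from rfl, hkey x, hx0, zero_smul]
  have hz : Lmul m x (u 1) = 0 := by
    rw [← LinearMap.mem_ker, hker]; trivial
  simpa [hf.2.2.2.1 x] using hz

end FrobAux





/-- A commutative †-Frobenius monoid on `H` is determined by its copyable elements. -/
theorem frobenius_ext_of_copyable (m₁ m₂ : H ⊗[ℂ] H →ₗ[ℂ] H) (u₁ u₂ : ℂ →ₗ[ℂ] H)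
    (h₁ : IsFrobenius m₁ u₁) (h₂ : IsFrobenius m₂ u₂)
    (hcopy : {ψ : H | Copyable m₁ u₁ ψ} = {ψ : H | Copyable m₂ u₂ ψ}) :
    m₁ = m₂ ∧ u₁ = u₂ := by
  have hc : ∀ ψ : H, Copyable m₁ u₁ ψ → Copyable m₂ u₂ ψ := by
    intro ψ hψ
    exact (Set.ext_iff.mp hcopy ψ).mp hψ
  constructor
  · apply TensorProduct.ext'
    intro a b
    rw [← sub_eq_zero]
    apply eq_zero_of_inner_copyable_zero h₁
    intro ψ hψ
    rw [inner_sub_right, copyable_inner_mul hψ, copyable_inner_mul (hc ψ hψ), sub_self]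
  · have h1 : u₁ 1 = u₂ 1 := by
      rw [← sub_eq_zero]
      apply eq_zero_of_inner_copyable_zero h₁
      intro ψ hψ
      rw [inner_sub_right, copyable_inner_unit hψ, copyable_inner_unit (hc ψ hψ), sub_self]
    exact LinearMap.ext_ring h1
end
end

section
/- For a commutative special Frobenius algebra (V, m, u, δ, ε) on a finite-dimensional complex vector space V, the set of copyable elements (vectors ψ ∈ V with δ(ψ) = ψ ⊗ ψ and ε(ψ) = 1) is a basis of V: the copyable elements are linearly independent and span V. -/
noncomputable section

open scoped TensorProduct ComplexConjugate InnerProductSpace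

open TensorProduct LinearMap in
theorem frob_aux {A : Type*} [CommRing A] [Algebra ℂ A] [FiniteDimensional ℂ A]
    (δ : A →ₗ[ℂ] A ⊗[ℂ] A) (ε : A →ₗ[ℂ] ℂ)
    (hδl : ∀ x y : A, δ (x * y)
      = TensorProduct.map (LinearMap.mulLeft ℂ x) LinearMap.id (δ y))
    (hδr : ∀ x y : A, δ (x * y)
      = TensorProduct.map LinearMap.id (LinearMap.mulRight ℂ y) (δ x))
    (hcl : ∀ x : A, TensorProduct.lid ℂ A (TensorProduct.map ε LinearMap.id (δ x)) = x)
    (hsp : ∀ x : A, LinearMap.mul' ℂ A (δ x) = x) :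
    LinearIndependent ℂ ((↑) : {ψ : A // δ ψ = ψ ⊗ₜ[ℂ] ψ ∧ ε ψ = 1} → A)
      ∧ Submodule.span ℂ {ψ : A | δ ψ = ψ ⊗ₜ[ℂ] ψ ∧ ε ψ = 1} = ⊤ := by
  classical
  -- nondegeneracy
  have hnd : ∀ x : A, (∀ y, ε (x * y) = 0) → x = 0 := by
    intro x hx
    have h0 : ∀ t : A ⊗[ℂ] A,
        TensorProduct.lid ℂ A (TensorProduct.map ε LinearMap.id
          (TensorProduct.map (LinearMap.mulLeft ℂ x) LinearMap.id t)) = 0 := by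
      intro t
      induction t using TensorProduct.induction_on with
      | zero => simp
      | tmul a c => simp [hx a]
      | add s t hs ht => simp [hs, ht]
    have h1 := hcl x
    rw [show δ x = TensorProduct.map (LinearMap.mulLeft ℂ x) LinearMap.id (δ 1) by
      rw [← hδl x 1, mul_one], h0] at h1
    exact h1.symm
  -- trace identity
  set βlin : A →ₗ[ℂ] Module.Dual ℂ A := (LinearMap.mul ℂ A).compr₂ ε with hβlin
  have htr : ∀ x : A, LinearMap.trace ℂ A (LinearMap.mulLeft ℂ x) = ε x := by
    intro x
    have hstepA : LinearMap.mulLeft ℂ x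
        = dualTensorHom ℂ A A (TensorProduct.map βlin LinearMap.id (δ x)) := by
      ext z
      have hz : ∀ t : A ⊗[ℂ] A,
          dualTensorHom ℂ A A (TensorProduct.map βlin LinearMap.id t) z
            = TensorProduct.lid ℂ A (TensorProduct.map ε LinearMap.id
                (TensorProduct.map (LinearMap.mulLeft ℂ z) LinearMap.id t)) := by
        intro t
        induction t using TensorProduct.induction_on with
        | zero => simp
        | tmul a c => simp [hβlin, mul_comm]
        | add s t hs ht => simp [hs, ht]
      rw [mulLeft_apply, hz, show TensorProduct.map (LinearMap.mulLeft ℂ z) LinearMap.id (δ x)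
          = δ (z * x) from (hδl z x).symm, hcl, mul_comm]
    have hstepC : ∀ t : A ⊗[ℂ] A,
        contractLeft ℂ A (TensorProduct.map βlin LinearMap.id t) = ε (LinearMap.mul' ℂ A t) := by
      intro t
      induction t using TensorProduct.induction_on with
      | zero => simp
      | tmul a c => simp [hβlin]
      | add s t hs ht => simp [hs, ht]
    rw [hstepA, trace_eq_contract_apply, hstepC, hsp]
  -- reduced
  haveI hred : IsReduced A := by
    constructor
    intro x hx
    refine hnd x fun y => ?_
    obtain ⟨n, hn⟩ := (Commute.all y x).isNilpotent_mul_left hx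
    have h2 : IsNilpotent (LinearMap.mulLeft ℂ (x * y)) :=
      ⟨n, by rw [LinearMap.pow_mulLeft]; rw [show (x*y)^n = (y*x)^n by ring, hn, LinearMap.mulLeft_zero_eq_zero]⟩
    have h3 := LinearMap.isNilpotent_trace_of_isNilpotent h2
    rw [← htr]
    exact h3.eq_zero
  haveI hart : IsArtinianRing A := isArtinian_of_tower ℂ inferInstance
  haveI hfin : Finite {I : Ideal A | I.IsMaximal} := (IsArtinianRing.setOfPred_isMaximal_finite A).to_subtype
  letI : Fintype {I : Ideal A | I.IsMaximal} := Fintype.ofFinite _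
  have hbijI : ∀ I : {I : Ideal A | I.IsMaximal},
      Function.Bijective (Algebra.ofId ℂ (A ⧸ I.1)) := by
    intro I
    haveI : I.1.IsMaximal := I.2
    constructor
    · exact (algebraMap ℂ (A ⧸ I.1)).injective
    · exact IsAlgClosed.algebraMap_bijective_of_isIntegral.2
  let e : ∀ I : {I : Ideal A | I.IsMaximal}, ℂ ≃ₐ[ℂ] (A ⧸ I.1) := fun I =>
    AlgEquiv.ofBijective (Algebra.ofId ℂ (A ⧸ I.1)) (hbijI I)
  let χ : {I : Ideal A | I.IsMaximal} → (A →ₐ[ℂ] ℂ) := fun I =>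
    ((e I).symm.toAlgHom).comp (Ideal.Quotient.mkₐ ℂ I.1)
  have hχmk : ∀ I x, (e I) (χ I x) = Ideal.Quotient.mk I.1 x := by
    intro I x
    simp [χ, e]
  have hχ0 : ∀ x : A, (∀ I, χ I x = 0) → x = 0 := by
    intro x hx
    have hnil : IsNilpotent x := by
      rw [nilpotent_iff_mem_prime]
      intro J hJ
      haveI hJm : J.IsMaximal := (IsArtinianRing.isPrime_iff_isMaximal J).mp hJ
      have h := hχmk ⟨J, hJm⟩ x
      rw [hx ⟨J, hJm⟩, map_zero] at h
      exact Ideal.Quotient.eq_zero_iff_mem.mp h.symm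
    exact hnil.eq_zero
  have hχs : ∀ t : {I : Ideal A | I.IsMaximal} → ℂ, ∃ x : A, ∀ I, χ I x = t I := by
    intro t
    obtain ⟨r, hr⟩ := Ideal.pi_quotient_surjective
      (I := fun I : {I : Ideal A | I.IsMaximal} => I.1)
      (fun I J hne => Ideal.isCoprime_iff_sup_eq.mpr
        (I.2.coprime_of_ne J.2 fun h => hne (Subtype.ext h)))
      (fun I => e I (t I))
    refine ⟨r, fun I => ?_⟩
    apply (e I).injective
    rw [hχmk]
    exact hr I
  -- linear equivalence with functions
  let Χ : A →ₗ[ℂ] ({I : Ideal A | I.IsMaximal} → ℂ) :=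
    LinearMap.pi fun I => (χ I).toLinearMap
  have hΧ : ∀ (x : A) I, Χ x I = χ I x := fun x I => rfl
  have hbij : Function.Bijective Χ := by
    constructor
    · intro x y hxy
      have := hχ0 (x - y) fun I => by
        rw [map_sub, show χ I x = Χ x I from rfl, show χ I y = Χ y I from rfl, hxy, sub_self]
      exact sub_eq_zero.mp this
    · intro t
      obtain ⟨x, hx⟩ := hχs t
      exact ⟨x, funext fun I => hx I⟩
  let E : A ≃ₗ[ℂ] ({I : Ideal A | I.IsMaximal} → ℂ) := LinearEquiv.ofBijective Χ hbij
  let b : Module.Basis {I : Ideal A | I.IsMaximal} ℂ A := (Pi.basisFun ℂ _).map E.symm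
  have hχb : ∀ I k, χ I (b k) = if I = k then 1 else 0 := by
    intro I k
    have h1 : E (b k) = Pi.single k 1 := by
      simp only [b, Module.Basis.map_apply, Pi.basisFun_apply, LinearEquiv.apply_symm_apply]
    have h2 : χ I (b k) = E (b k) I := rfl
    rw [h2, h1, Pi.single_apply]
  have hrepr : ∀ (x : A) k, b.repr x k = χ k x := by
    intro x k
    have : b.repr x = (Pi.basisFun ℂ _).repr (E x) := by
      simp only [b, Module.Basis.map_repr, LinearEquiv.symm_symm, LinearEquiv.trans_apply]
    rw [this, Pi.basisFun_repr]
    rfl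
  have hbb : ∀ k, b k * b k = b k := by
    intro k
    have h2 : ∀ I, χ I (b k * b k - b k) = 0 := fun I => by
      rw [map_sub, map_mul, hχb]
      by_cases h : I = k <;> simp [h, hχb, if_pos, if_neg]
    exact sub_eq_zero.mp (hχ0 _ h2)
  -- tensor functionals
  let φ : {I : Ideal A | I.IsMaximal} → {I : Ideal A | I.IsMaximal} →
      (A ⊗[ℂ] A →ₗ[ℂ] ℂ) := fun a c =>
    (LinearMap.mul' ℂ ℂ) ∘ₗ (TensorProduct.map (χ a).toLinearMap (χ c).toLinearMap)
  have hφtmul : ∀ a c (x y : A), φ a c (x ⊗ₜ[ℂ] y) = χ a x * χ c y := by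
    intro a c x y
    simp [φ, LinearMap.mul'_apply]
  have hφrepr : ∀ (t : A ⊗[ℂ] A) a c, (b.tensorProduct b).repr t (a, c) = φ a c t := by
    intro t a c
    have hmaps : (Finsupp.lapply (a, c)) ∘ₗ ((b.tensorProduct b).repr : A ⊗[ℂ] A →ₗ[ℂ] _)
        = φ a c := by
      apply (b.tensorProduct b).ext
      rintro ⟨i, j⟩
      simp only [LinearMap.comp_apply, LinearEquiv.coe_coe, Module.Basis.repr_self,
        Finsupp.lapply_apply, Finsupp.single_apply, Module.Basis.tensorProduct_apply, hφtmul, hχb]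
      by_cases hi : a = i <;> by_cases hj : c = j <;>
        simp [hi, hj, Prod.ext_iff, eq_comm]
    exact LinearMap.congr_fun hmaps t
  have hext : ∀ t s : A ⊗[ℂ] A, (∀ a c, φ a c t = φ a c s) → t = s := by
    intro t s h
    apply (b.tensorProduct b).repr.injective
    refine Finsupp.ext fun p => ?_
    obtain ⟨a, c⟩ := p
    rw [hφrepr, hφrepr]
    exact h a c
  have hφml : ∀ a c (x : A) (t : A ⊗[ℂ] A),
      φ a c (TensorProduct.map (LinearMap.mulLeft ℂ x) LinearMap.id t) = χ a x * φ a c t := by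
    intro a c x t
    induction t using TensorProduct.induction_on with
    | zero => simp
    | tmul p q => simp [hφtmul, map_mul]; ring
    | add s t hs ht => simp [hs, ht]; ring
  have hφmr : ∀ a c (y : A) (t : A ⊗[ℂ] A),
      φ a c (TensorProduct.map LinearMap.id (LinearMap.mulRight ℂ y) t) = χ c y * φ a c t := by
    intro a c y t
    induction t using TensorProduct.induction_on with
    | zero => simp
    | tmul p q => simp [hφtmul, map_mul]; ring
    | add s t hs ht => simp [hs, ht]; ring
  have hχm : ∀ k (t : A ⊗[ℂ] A), χ k (LinearMap.mul' ℂ A t) = φ k k t := by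
    intro k t
    induction t using TensorProduct.induction_on with
    | zero => simp
    | tmul p q => simp [hφtmul, LinearMap.mul'_apply, map_mul]
    | add s t hs ht => simp [hs, ht]
  -- copyability of the basis vectors
  have hδb : ∀ k, δ (b k) = b k ⊗ₜ[ℂ] b k := by
    intro k
    apply hext
    intro a c
    have hδbk : δ (b k) = TensorProduct.map (LinearMap.mulLeft ℂ (b k)) LinearMap.id (δ (b k)) := by
      conv_lhs => rw [← hbb k, hδl]
    have hδbk' : δ (b k)
        = TensorProduct.map LinearMap.id (LinearMap.mulRight ℂ (b k)) (δ (b k)) := by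
      conv_lhs => rw [← hbb k, hδr]
    have hac : φ a c (δ (b k)) = χ a (b k) * φ a c (δ (b k)) := by
      conv_lhs => rw [hδbk, hφml]
    have hac' : φ a c (δ (b k)) = χ c (b k) * φ a c (δ (b k)) := by
      conv_lhs => rw [hδbk', hφmr]
    by_cases ha : a = k
    · by_cases hc : c = k
      · subst ha; subst hc
        rw [← hχm, hsp, hφtmul, hχb]
        simp
      · rw [hac', hχb, if_neg hc, zero_mul, hφtmul]
        rw [hχb c k, if_neg hc, mul_zero]
    · rw [hac, hχb, if_neg ha, zero_mul, hφtmul]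
      rw [hχb a k, if_neg ha, zero_mul]
  have hεb : ∀ k, ε (b k) = 1 := by
    intro k
    have h := hcl (b k)
    rw [hδb k] at h
    rw [TensorProduct.map_tmul, LinearMap.id_coe, id_eq, TensorProduct.lid_tmul] at h
    have h2 : (ε (b k) - 1) • b k = 0 := by
      rw [sub_smul, one_smul, h, sub_self]
    rcases smul_eq_zero.mp h2 with h3 | h3
    · exact sub_eq_zero.mp h3
    · exact absurd h3 (b.ne_zero k)
  -- the set of copyable elements is exactly the basis
  have hS : {ψ : A | δ ψ = ψ ⊗ₜ[ℂ] ψ ∧ ε ψ = 1} = Set.range b := by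
    ext ψ
    constructor
    · rintro ⟨h1, h2⟩
      have hψ : ψ = ∑ a, χ a ψ • b a := by
        conv_lhs => rw [← b.sum_repr ψ]
        exact Finset.sum_congr rfl fun a _ => by rw [hrepr]
      have hδψ : δ ψ = ∑ a, χ a ψ • (b a ⊗ₜ[ℂ] b a) := by
        conv_lhs => rw [hψ]
        rw [map_sum]
        exact Finset.sum_congr rfl fun a _ => by rw [map_smul, hδb]
      have hq : ∀ a c, χ a ψ * χ c ψ = if a = c then χ a ψ else 0 := by
        intro a c
        have h3 := congrArg (φ a c) h1
        rw [hφtmul] at h3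
        rw [hδψ, map_sum] at h3
        have h4 : ∀ i : {I : Ideal A | I.IsMaximal},
            φ a c (χ i ψ • (b i ⊗ₜ[ℂ] b i))
              = χ i ψ * ((if a = i then 1 else 0) * (if c = i then 1 else 0)) := by
          intro i
          rw [map_smul, smul_eq_mul, hφtmul, hχb, hχb]
        rw [Finset.sum_congr rfl fun i _ => h4 i] at h3
        by_cases hac2 : a = c
        · subst hac2
          rw [Finset.sum_eq_single a (fun i _ hi => by
              rw [if_neg fun h => hi h.symm, zero_mul, mul_zero])
            (fun h => absurd (Finset.mem_univ a) h), if_pos rfl] at h3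
          have h9 : (if a = a then (χ a) ψ else 0) = χ a ψ := if_pos rfl
          rw [h9, ← h3]
          ring
        · rw [Finset.sum_eq_zero (fun i _ => by
            by_cases hai : a = i
            · have hci : ¬c = i := fun h => hac2 (hai.trans h.symm)
              rw [if_neg hci, mul_zero, mul_zero]
            · rw [if_neg hai, zero_mul, mul_zero])] at h3
          rw [if_neg hac2]
          exact h3.symm
      have hsum1 : ∑ a, χ a ψ = 1 := by
        have h5 : ε ψ = ∑ a, χ a ψ := by
          conv_lhs => rw [hψ]
          rw [map_sum]
          exact Finset.sum_congr rfl fun a _ => by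
            rw [map_smul, smul_eq_mul, hεb, mul_one]
        exact h5.symm.trans h2
      obtain ⟨k, _, hk⟩ := Finset.exists_ne_zero_of_sum_ne_zero
        (hsum1.symm ▸ (one_ne_zero : (1:ℂ) ≠ 0))
      have hk1 : χ k ψ = 1 := by
        have h6 := hq k k
        rw [if_pos rfl] at h6
        exact mul_left_cancel₀ hk (h6.trans (mul_one _).symm)
      refine ⟨k, ?_⟩
      have h7 := hψ
      rw [Finset.sum_eq_single k (fun a _ hak => by
          have h8 := hq a k
          rw [if_neg hak, hk1, mul_one] at h8
          rw [h8, zero_smul])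
        (fun h => absurd (Finset.mem_univ k) h), hk1, one_smul] at h7
      exact h7.symm
    · rintro ⟨k, rfl⟩
      exact ⟨hδb k, hεb k⟩
  constructor
  · show LinearIndependent ℂ ((↑) : {ψ : A | δ ψ = ψ ⊗ₜ[ℂ] ψ ∧ ε ψ = 1} → A)
    rw [hS]
    exact ((linearIndepOn_id_range_iff b.injective).2 b.linearIndependent).linearIndependent
  · rw [hS]
    exact b.span_eq


/-- For a commutative special Frobenius algebra on a finite-dimensional complex vector
space `V` (no inner product involved), the copyable elements form a basis of `V`. -/
theorem copyable_basis_of_special_frobenius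
    {V : Type*} [AddCommGroup V] [Module ℂ V] [FiniteDimensional ℂ V]
    (m : V ⊗[ℂ] V →ₗ[ℂ] V) (u : ℂ →ₗ[ℂ] V) (δ : V →ₗ[ℂ] V ⊗[ℂ] V) (ε : V →ₗ[ℂ] ℂ)
    (hassoc : m ∘ₗ TensorProduct.map m LinearMap.id
      = m ∘ₗ TensorProduct.map LinearMap.id m ∘ₗ (TensorProduct.assoc ℂ V V V).toLinearMap)
    (hcomm : m ∘ₗ (TensorProduct.comm ℂ V V).toLinearMap = m)
    (hunitl : ∀ x : V, m (u 1 ⊗ₜ[ℂ] x) = x)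
    (hunitr : ∀ x : V, m (x ⊗ₜ[ℂ] u 1) = x)
    (hcoassoc : (TensorProduct.assoc ℂ V V V).toLinearMap
        ∘ₗ TensorProduct.map δ LinearMap.id ∘ₗ δ
      = TensorProduct.map LinearMap.id δ ∘ₗ δ)
    (hcounitl : (TensorProduct.lid ℂ V).toLinearMap
        ∘ₗ TensorProduct.map ε LinearMap.id ∘ₗ δ = LinearMap.id)
    (hcounitr : (TensorProduct.rid ℂ V).toLinearMap
        ∘ₗ TensorProduct.map LinearMap.id ε ∘ₗ δ = LinearMap.id)
    (hfrob1 : TensorProduct.map m LinearMap.id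
        ∘ₗ (TensorProduct.assoc ℂ V V V).symm.toLinearMap
        ∘ₗ TensorProduct.map LinearMap.id δ = δ ∘ₗ m)
    (hfrob2 : TensorProduct.map LinearMap.id m
        ∘ₗ (TensorProduct.assoc ℂ V V V).toLinearMap
        ∘ₗ TensorProduct.map δ LinearMap.id = δ ∘ₗ m)
    (hspecial : m ∘ₗ δ = LinearMap.id) :
    LinearIndependent ℂ ((↑) : {ψ : V // δ ψ = ψ ⊗ₜ[ℂ] ψ ∧ ε ψ = 1} → V)
      ∧ Submodule.span ℂ {ψ : V | δ ψ = ψ ⊗ₜ[ℂ] ψ ∧ ε ψ = 1} = ⊤ := by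

  letI ring : CommRing V :=
  { (inferInstance : AddCommGroup V) with
    mul := fun x y => m (x ⊗ₜ[ℂ] y)
    one := u 1
    left_distrib := fun a b c => by
      show m (a ⊗ₜ[ℂ] (b + c)) = m (a ⊗ₜ[ℂ] b) + m (a ⊗ₜ[ℂ] c)
      rw [TensorProduct.tmul_add, map_add]
    right_distrib := fun a b c => by
      show m ((a + b) ⊗ₜ[ℂ] c) = m (a ⊗ₜ[ℂ] c) + m (b ⊗ₜ[ℂ] c)
      rw [TensorProduct.add_tmul, map_add]
    zero_mul := fun a => by
      show m ((0 : V) ⊗ₜ[ℂ] a) = 0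
      rw [TensorProduct.zero_tmul, map_zero]
    mul_zero := fun a => by
      show m (a ⊗ₜ[ℂ] (0 : V)) = 0
      rw [TensorProduct.tmul_zero, map_zero]
    mul_assoc := fun a b c => by
      have h := LinearMap.congr_fun hassoc ((a ⊗ₜ[ℂ] b) ⊗ₜ[ℂ] c)
      simp at h
      exact h
    one_mul := fun a => hunitl a
    mul_one := fun a => hunitr a
    mul_comm := fun a b => by
      have h := LinearMap.congr_fun hcomm (b ⊗ₜ[ℂ] a)
      simp only [LinearMap.comp_apply, LinearEquiv.coe_coe, TensorProduct.comm_tmul] at h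
      exact h }
  have hsmul_mul : ∀ (c : ℂ) (x y : V), (c • x) * y = c • (x * y) := fun c x y => by
    show m ((c • x) ⊗ₜ[ℂ] y) = c • m (x ⊗ₜ[ℂ] y)
    rw [← TensorProduct.smul_tmul', map_smul]
  letI alg : Algebra ℂ V :=
  { toSMul := inferInstance
    algebraMap :=
    { toFun := fun c => c • (1 : V)
      map_one' := one_smul ℂ (1 : V)
      map_mul' := fun c d => by
        show (c * d) • (1 : V) = (c • (1 : V)) * (d • (1 : V))
        rw [mul_smul, hsmul_mul c (1 : V) (d • (1 : V)), one_mul]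
      map_zero' := zero_smul ℂ (1 : V)
      map_add' := fun c d => add_smul c d (1 : V) }
    commutes' := fun c x => mul_comm _ _
    smul_def' := fun c x => ((hsmul_mul c 1 x).trans (by rw [one_mul])).symm }
  have auxL : ∀ (x : V) (t : V ⊗[ℂ] V),
      TensorProduct.map m LinearMap.id ((TensorProduct.assoc ℂ V V V).symm (x ⊗ₜ[ℂ] t))
        = TensorProduct.map (LinearMap.mulLeft ℂ x) LinearMap.id t := by
    intro x t
    induction t using TensorProduct.induction_on with
    | zero =>
      rw [TensorProduct.tmul_zero, LinearEquiv.map_zero, LinearMap.map_zero, LinearMap.map_zero]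
    | tmul a c =>
      rw [TensorProduct.assoc_symm_tmul, TensorProduct.map_tmul, TensorProduct.map_tmul]
      rfl
    | add s t hs ht =>
      rw [TensorProduct.tmul_add, LinearEquiv.map_add, LinearMap.map_add, hs, ht,
        LinearMap.map_add]
  have auxR : ∀ (y : V) (t : V ⊗[ℂ] V),
      TensorProduct.map LinearMap.id m ((TensorProduct.assoc ℂ V V V) (t ⊗ₜ[ℂ] y))
        = TensorProduct.map LinearMap.id (LinearMap.mulRight ℂ y) t := by
    intro y t
    induction t using TensorProduct.induction_on with
    | zero =>
      rw [TensorProduct.zero_tmul, LinearEquiv.map_zero, LinearMap.map_zero, LinearMap.map_zero]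
    | tmul a c =>
      rw [TensorProduct.assoc_tmul, TensorProduct.map_tmul, TensorProduct.map_tmul]
      rfl
    | add s t hs ht =>
      rw [TensorProduct.add_tmul, LinearEquiv.map_add, LinearMap.map_add, hs, ht,
        LinearMap.map_add]
  have hδl : ∀ x y : V, δ (x * y)
      = TensorProduct.map (LinearMap.mulLeft ℂ x) LinearMap.id (δ y) := by
    intro x y
    have h := LinearMap.congr_fun hfrob1 (x ⊗ₜ[ℂ] y)
    simp only [LinearMap.comp_apply, TensorProduct.map_tmul, LinearMap.id_coe, id_eq,
      LinearEquiv.coe_coe] at h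
    rw [show x * y = m (x ⊗ₜ[ℂ] y) from rfl, ← h, auxL]
  have hδr : ∀ x y : V, δ (x * y)
      = TensorProduct.map LinearMap.id (LinearMap.mulRight ℂ y) (δ x) := by
    intro x y
    have h := LinearMap.congr_fun hfrob2 (x ⊗ₜ[ℂ] y)
    simp only [LinearMap.comp_apply, TensorProduct.map_tmul, LinearMap.id_coe, id_eq,
      LinearEquiv.coe_coe] at h
    rw [show x * y = m (x ⊗ₜ[ℂ] y) from rfl, ← h, auxR]
  have hcl : ∀ x : V, TensorProduct.lid ℂ V (TensorProduct.map ε LinearMap.id (δ x)) = x := by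
    intro x
    have h := LinearMap.congr_fun hcounitl x
    simpa using h
  have hm : LinearMap.mul' ℂ V = m := TensorProduct.ext' fun a c => by
    rw [LinearMap.mul'_apply]; rfl
  have hsp : ∀ x : V, LinearMap.mul' ℂ V (δ x) = x := by
    intro x
    rw [hm]
    exact LinearMap.congr_fun hspecial x
  exact frob_aux δ ε hδl hδr hcl hsp
end
end

section
/- Comonoid homomorphisms between commutative †-Frobenius monoids correspond exactly to functions between their sets of copyable elements: every comonoid homomorphism f : H → K (a linear map with δ_K ∘ f = (f ⊗ f) ∘ δ_H and ε_K ∘ f = ε_H) maps copyable elements of H to copyable elements of K, and the resulting restriction map, from the set of comonoid homomorphisms H → K to the set of functions from the copyable elements of (H, m_H, u_H) to the copyable elements of (K, m_K, u_K), is a bijection. -/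
noncomputable section

open scoped TensorProduct ComplexConjugate InnerProductSpace

open scoped TensorProduct ComplexConjugate InnerProductSpace

variable {H : Type*} [NormedAddCommGroup H] [InnerProductSpace ℂ H] [FiniteDimensional ℂ H]

instance : Inner ℂ (H ⊗[ℂ] H) := InnerProductSpace.toInner

namespace FrobAux

variable {H : Type*} [NormedAddCommGroup H] [InnerProductSpace ℂ H] [FiniteDimensional ℂ H]

/-- Extensionality in `H ⊗ H` via inner products against simple tensors. -/
theorem ext_tmul {x y : H ⊗[ℂ] H}
    (h : ∀ a b : H, ⟪x, a ⊗ₜ[ℂ] b⟫_ℂ = ⟪y, a ⊗ₜ[ℂ] b⟫_ℂ) : x = y := by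
  have key : ∀ t : H ⊗[ℂ] H, ⟪x - y, t⟫_ℂ = 0 := by
    have hspan := TensorProduct.span_tmul_eq_top ℂ H H
    intro t
    have ht : t ∈ Submodule.span ℂ { t : H ⊗[ℂ] H | ∃ a b, a ⊗ₜ b = t } := by
      rw [hspan]; trivial
    induction ht using Submodule.span_induction with
    | mem t ht => obtain ⟨a, b, rfl⟩ := ht; rw [inner_sub_left, h, sub_self]
    | zero => simp
    | add _ _ _ _ h1 h2 => rw [inner_add_right, h1, h2, add_zero]
    | smul c _ _ h1 => rw [inner_smul_right, h1, mul_zero]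
  have := key (x - y)
  rw [inner_self_eq_zero] at this
  exact sub_eq_zero.mp this

variable (m : H ⊗[ℂ] H →ₗ[ℂ] H) (u : ℂ →ₗ[ℂ] H)

theorem copy_inner_mul {ψ : H} (hψ : Copyable m u ψ) (a b : H) :
    ⟪ψ, m (a ⊗ₜ[ℂ] b)⟫_ℂ = ⟪ψ, a⟫_ℂ * ⟪ψ, b⟫_ℂ := by
  rw [← LinearMap.adjoint_inner_left, hψ.1, TensorIP.inner_tmul]

theorem copy_inner_unit {ψ : H} (hψ : Copyable m u ψ) : ⟪ψ, u 1⟫_ℂ = 1 := by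
  rw [← inner_conj_symm]
  have : ⟪u 1, ψ⟫_ℂ = ⟪(1 : ℂ), LinearMap.adjoint u ψ⟫_ℂ := by
    rw [LinearMap.adjoint_inner_right]
  rw [this, hψ.2]
  simp [inner]

end FrobAux
namespace FrobAux2
open FrobAux

variable {H : Type*} [NormedAddCommGroup H] [InnerProductSpace ℂ H] [FiniteDimensional ℂ H]

/-- Type synonym on which we install the algebra structure coming from `m, u`. -/
@[nolint unusedArguments]
def FA (_m : H ⊗[ℂ] H →ₗ[ℂ] H) (_u : ℂ →ₗ[ℂ] H) (_h : IsFrobenius _m _u) : Type _ := H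

variable (m : H ⊗[ℂ] H →ₗ[ℂ] H) (u : ℂ →ₗ[ℂ] H) (h : IsFrobenius m u)

instance : AddCommGroup (FA m u h) := inferInstanceAs (AddCommGroup H)
instance : Module ℂ (FA m u h) := inferInstanceAs (Module ℂ H)

/-- identity map `H → FA m u h`. -/
def toFA : H ≃ₗ[ℂ] FA m u h := LinearEquiv.refl ℂ H

omit h in
theorem mul_assoc' (h : IsFrobenius m u) (a b c : H) : m (m (a ⊗ₜ[ℂ] b) ⊗ₜ[ℂ] c) = m (a ⊗ₜ[ℂ] m (b ⊗ₜ[ℂ] c)) := by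
  have := LinearMap.congr_fun h.1 ((a ⊗ₜ[ℂ] b) ⊗ₜ[ℂ] c)
  simpa using this

omit h in
theorem mul_comm' (h : IsFrobenius m u) (a b : H) : m (a ⊗ₜ[ℂ] b) = m (b ⊗ₜ[ℂ] a) := by
  have := LinearMap.congr_fun h.2.1 (b ⊗ₜ[ℂ] a)
  simpa using this

noncomputable instance : CommRing (FA m u h) :=
  { (inferInstance : AddCommGroup (FA m u h)) with
    mul := fun a b => toFA m u h (m ((toFA m u h).symm a ⊗ₜ[ℂ] (toFA m u h).symm b))
    one := toFA m u h (u 1)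
    mul_assoc := fun a b c => mul_assoc' m u h a b c
    one_mul := fun a => h.2.2.1 a
    mul_one := fun a => h.2.2.2.1 a
    mul_comm := fun a b => mul_comm' m u h a b
    left_distrib := fun a b c => by
      show m (a ⊗ₜ (b + c)) = m (a ⊗ₜ b) + m (a ⊗ₜ c)
      erw [TensorProduct.tmul_add, map_add]
    right_distrib := fun a b c => by
      show m ((a + b) ⊗ₜ c) = m (a ⊗ₜ c) + m (b ⊗ₜ c)
      erw [TensorProduct.add_tmul, map_add]
    zero_mul := fun a => by
      show m ((0 : H) ⊗ₜ a) = 0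
      erw [TensorProduct.zero_tmul, map_zero]
    mul_zero := fun a => by
      show m (a ⊗ₜ (0 : H)) = 0
      erw [TensorProduct.tmul_zero, map_zero] }

theorem fa_mul (a b : FA m u h) :
    a * b = toFA m u h (m ((toFA m u h).symm a ⊗ₜ[ℂ] (toFA m u h).symm b)) := rfl

theorem fa_one : (1 : FA m u h) = toFA m u h (u 1) := rfl

noncomputable instance : Algebra ℂ (FA m u h) :=
  Algebra.ofModule
    (fun r x y => by
      show m ((r • x) ⊗ₜ y) = r • m (x ⊗ₜ y)
      exact (congrArg m (TensorProduct.smul_tmul' (R := ℂ) (R' := ℂ) (M := H) (N := H) r x y).symm).trans (map_smul m r _))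
    (fun r x y => by
      show m (x ⊗ₜ (r • y)) = r • m (x ⊗ₜ y)
      exact (congrArg m (TensorProduct.tmul_smul (R := ℂ) (R' := ℂ) (M := H) (N := H) r x y)).trans (map_smul m r _))

instance : FiniteDimensional ℂ (FA m u h) := inferInstanceAs (FiniteDimensional ℂ H)

instance : IsArtinianRing (FA m u h) :=
  isArtinian_of_tower ℂ (inferInstanceAs (IsArtinian ℂ (FA m u h)))

end FrobAux2
namespace FrobAux3
open FrobAux FrobAux2

variable {H : Type*} [NormedAddCommGroup H] [InnerProductSpace ℂ H] [FiniteDimensional ℂ H]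
variable (m : H ⊗[ℂ] H →ₗ[ℂ] H) (u : ℂ →ₗ[ℂ] H)

/-- Left multiplication operator. -/
noncomputable def La (a : H) : H →ₗ[ℂ] H := m ∘ₗ TensorProduct.mk ℂ H H a

omit [FiniteDimensional ℂ H] in
theorem La_apply (a x : H) : La m a x = m (a ⊗ₜ[ℂ] x) := rfl

theorem La_mul (h : IsFrobenius m u) (a b : H) :
    La m (m (a ⊗ₜ[ℂ] b)) = La m a ∘ₗ La m b := by
  ext x
  simp only [La_apply, LinearMap.comp_apply]
  exact mul_assoc' m u h a b x

theorem La_comm (h : IsFrobenius m u) (a b : H) : Commute (La m a) (La m b) := by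
  have key : ∀ c d : H, La m c ∘ₗ La m d = La m (m (c ⊗ₜ[ℂ] d)) := fun c d =>
    (La_mul m u h c d).symm
  show La m a * La m b = La m b * La m a
  have h1 : La m a * La m b = La m (m (a ⊗ₜ[ℂ] b)) := key a b
  have h2 : La m b * La m a = La m (m (b ⊗ₜ[ℂ] a)) := key b a
  rw [h1, h2, mul_comm' m u h a b]

theorem frob_pointwise (h : IsFrobenius m u) (a z : H) :
    LinearMap.adjoint m (La m a z)
      = TensorProduct.map (La m a) LinearMap.id (LinearMap.adjoint m z) := by
  have key := LinearMap.congr_fun h.2.2.2.2 (a ⊗ₜ[ℂ] z)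
  simp only [LinearMap.comp_apply, TensorProduct.map_tmul, LinearMap.id_apply] at key
  rw [La_apply, ← key]
  generalize LinearMap.adjoint m z = t
  induction t using TensorProduct.induction_on with
  | zero => simp
  | tmul x y =>
      simp [La_apply]
  | add s t hs ht =>
      rw [TensorProduct.tmul_add, map_add, map_add, map_add, hs, ht]

theorem adj_La_mul (h : IsFrobenius m u) (a x y : H) :
    LinearMap.adjoint (La m a) (m (x ⊗ₜ[ℂ] y))
      = m ((LinearMap.adjoint (La m a) x) ⊗ₜ[ℂ] y) := by
  refine ext_inner_right ℂ fun z => ?_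
  rw [LinearMap.adjoint_inner_left]
  have h1 : ⟪m (x ⊗ₜ[ℂ] y), La m a z⟫_ℂ
      = ⟪x ⊗ₜ[ℂ] y, TensorProduct.map (La m a) LinearMap.id (LinearMap.adjoint m z)⟫_ℂ := by
    rw [← LinearMap.adjoint_inner_right m, frob_pointwise m u h]
  have h2 : ⟪m ((LinearMap.adjoint (La m a) x) ⊗ₜ[ℂ] y), z⟫_ℂ
      = ⟪(LinearMap.adjoint (La m a) x) ⊗ₜ[ℂ] y, LinearMap.adjoint m z⟫_ℂ := by
    rw [← LinearMap.adjoint_inner_right m]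
  rw [h1, h2]
  generalize LinearMap.adjoint m z = t
  induction t using TensorProduct.induction_on with
  | zero => simp
  | tmul c d =>
      simp only [TensorProduct.map_tmul, LinearMap.id_apply, TensorIP.inner_tmul]
      rw [← LinearMap.adjoint_inner_left (La m a)]
  | add s t hs ht => rw [map_add, inner_add_right, inner_add_right, hs, ht]

theorem adjoint_La (h : IsFrobenius m u) (a : H) :
    LinearMap.adjoint (La m a) = La m (LinearMap.adjoint (La m a) (u 1)) := by
  ext y
  conv_lhs => rw [show y = m (u 1 ⊗ₜ[ℂ] y) from (h.2.2.1 y).symm]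
  rw [adj_La_mul m u h, La_apply]

theorem La_normal (h : IsFrobenius m u) (a : H) :
    Commute (La m a) (LinearMap.adjoint (La m a)) := by
  rw [adjoint_La m u h]
  exact La_comm m u h _ _

end FrobAux3
namespace FrobAux4
open FrobAux FrobAux2 FrobAux3

variable {H : Type*} [NormedAddCommGroup H] [InnerProductSpace ℂ H] [FiniteDimensional ℂ H]

theorem inner_self_T {T : H →ₗ[ℂ] H} (x : H) :
    ⟪x, (LinearMap.adjoint T * T) x⟫_ℂ = ⟪T x, T x⟫_ℂ := by
  show ⟪x, LinearMap.adjoint T (T x)⟫_ℂ = _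
  exact LinearMap.adjoint_inner_right T x (T x)

theorem selfadj_sq_zero {T : H →ₗ[ℂ] H} (hT : LinearMap.adjoint T = T)
    (h2 : T * T = 0) : T = 0 := by
  ext x
  have : ⟪T x, T x⟫_ℂ = 0 := by
    rw [← inner_self_T x, hT, h2]
    simp
  simpa using inner_self_eq_zero.mp this

theorem adjoint_pow (T : H →ₗ[ℂ] H) (n : ℕ) :
    LinearMap.adjoint (T ^ n) = (LinearMap.adjoint T) ^ n := by
  induction n with
  | zero =>
      simp only [pow_zero]
      rw [Module.End.one_eq_id]
      exact ((LinearMap.eq_adjoint_iff LinearMap.id LinearMap.id).mpr fun x y => rfl).symm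
  | succ n ih =>
      rw [pow_succ, Module.End.mul_eq_comp, LinearMap.adjoint_comp, ih, ← Module.End.mul_eq_comp,
        ← pow_succ']

theorem selfadj_pow_zero {T : H →ₗ[ℂ] H} (hT : LinearMap.adjoint T = T) :
    ∀ n : ℕ, T ^ n = 0 → T = 0 := by
  intro n
  induction n using Nat.strong_induction_on with
  | _ n ih =>
    intro hn
    rcases n with _ | n
    · calc T = T * T ^ 0 := by rw [pow_zero, mul_one]
        _ = 0 := by rw [hn, mul_zero]
    · rcases n with _ | k
      · simpa using hn
      · have hsq : (T ^ (k + 1)) * (T ^ (k + 1)) = 0 := by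
          have h1 : T ^ (k + 1) * T ^ (k + 1) = T ^ (k + 2) * T ^ k := by
            rw [← pow_add, ← pow_add]; ring_nf
          rw [h1, hn, zero_mul]
        have hsa : LinearMap.adjoint (T ^ (k + 1)) = T ^ (k + 1) := by
          rw [adjoint_pow, hT]
        exact ih (k + 1) (by omega) (selfadj_sq_zero hsa hsq)

theorem normal_nilpotent_zero {T : H →ₗ[ℂ] H}
    (hc : Commute T (LinearMap.adjoint T)) {n : ℕ} (hn : T ^ n = 0) : T = 0 := by
  set S : H →ₗ[ℂ] H := LinearMap.adjoint T * T with hS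
  have hSa : LinearMap.adjoint S = S := by
    rw [hS, Module.End.mul_eq_comp, LinearMap.adjoint_comp, LinearMap.adjoint_adjoint,
      ← Module.End.mul_eq_comp]
  have hSn : S ^ n = 0 := by
    rw [hS, hc.symm.mul_pow, hn, mul_zero]
  have hS0 : S = 0 := selfadj_pow_zero hSa n hSn
  ext x
  have : ⟪T x, T x⟫_ℂ = 0 := by
    rw [← inner_self_T x, ← hS, hS0]
    simp
  simpa using inner_self_eq_zero.mp this

end FrobAux4
namespace FrobAux5
open FrobAux FrobAux2 FrobAux3 FrobAux4

variable {H : Type*} [NormedAddCommGroup H] [InnerProductSpace ℂ H] [FiniteDimensional ℂ H]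
variable (m : H ⊗[ℂ] H →ₗ[ℂ] H) (u : ℂ →ₗ[ℂ] H) (h : IsFrobenius m u)

/-- The character associated to a copyable element. -/
noncomputable def charOfCopyable {ψ : H} (hψ : Copyable m u ψ) : FA m u h →ₐ[ℂ] ℂ where
  toFun x := ⟪ψ, (x : H)⟫_ℂ
  map_one' := copy_inner_unit m u hψ
  map_mul' x y := copy_inner_mul m u hψ (x : H) (y : H)
  map_zero' := inner_zero_right _
  map_add' x y := inner_add_right _ _ _
  commutes' c := by
    rw [Algebra.algebraMap_eq_smul_one]
    show ⟪ψ, c • (u 1 : H)⟫_ℂ = c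
    rw [inner_smul_right, copy_inner_unit m u hψ, mul_one]

theorem charOfCopyable_apply {ψ : H} (hψ : Copyable m u ψ) (x : FA m u h) :
    charOfCopyable m u h hψ x = ⟪ψ, (x : H)⟫_ℂ := rfl

/-- Every character comes from a copyable element, via Riesz representation. -/
theorem copyable_of_char (χ : FA m u h →ₐ[ℂ] ℂ) :
    ∃ ψ : H, Copyable m u ψ ∧ ∀ y : FA m u h, ⟪ψ, (y : H)⟫_ℂ = χ y := by
  set L : H →ₗ[ℂ] ℂ := (χ.toLinearMap : FA m u h →ₗ[ℂ] ℂ) with hL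
  set ψ : H := (InnerProductSpace.toDual ℂ H).symm (LinearMap.toContinuousLinearMap L) with hψdef
  have hψ : ∀ y : H, ⟪ψ, y⟫_ℂ = χ (toFA m u h y) := fun y => by
    rw [hψdef]
    exact InnerProductSpace.toDual_symm_apply
  have hone : ⟪ψ, u 1⟫_ℂ = 1 := by
    have : toFA m u h (u 1) = (1 : FA m u h) := rfl
    rw [hψ, this, map_one]
  refine ⟨ψ, ⟨?_, ?_⟩, fun y => hψ (y : H)⟩
  · refine ext_tmul fun a b => ?_
    rw [LinearMap.adjoint_inner_left, TensorIP.inner_tmul]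
    have hmul : toFA m u h (m (a ⊗ₜ[ℂ] b)) = toFA m u h a * toFA m u h b := rfl
    rw [hψ, hmul, map_mul, ← hψ, ← hψ]
  · have h1 : ⟪(1 : ℂ), LinearMap.adjoint u ψ⟫_ℂ = ⟪u 1, ψ⟫_ℂ :=
      LinearMap.adjoint_inner_right u 1 ψ
    have h2 : ⟪(1 : ℂ), LinearMap.adjoint u ψ⟫_ℂ = LinearMap.adjoint u ψ := by
      simp [inner]
    have h3 : ⟪u 1, ψ⟫_ℂ = 1 := by
      rw [← inner_conj_symm, hone, map_one]
    rw [h2, h3] at h1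
    exact h1

/-- Every maximal ideal is contained in the kernel following a character. -/
theorem char_of_maximal (I : Ideal (FA m u h)) (hI : I.IsMaximal) :
    ∃ χ : FA m u h →ₐ[ℂ] ℂ, ∀ y, χ y = 0 → y ∈ I := by
  letI : Field (FA m u h ⧸ I) := Ideal.Quotient.field I
  haveI : Module.Finite ℂ (FA m u h ⧸ I) :=
    Module.Finite.of_surjective (Ideal.Quotient.mkₐ ℂ I).toLinearMap
      (Ideal.Quotient.mkₐ_surjective ℂ I)
  have hsurj : Function.Surjective (algebraMap ℂ (FA m u h ⧸ I)) :=
    IsAlgClosed.algebraMap_bijective_of_isIntegral.2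
  have hinj : Function.Injective (algebraMap ℂ (FA m u h ⧸ I)) :=
    RingHom.injective _
  let e : ℂ ≃ₐ[ℂ] (FA m u h ⧸ I) :=
    AlgEquiv.ofBijective (Algebra.ofId ℂ _) ⟨hinj, hsurj⟩
  refine ⟨(e.symm.toAlgHom).comp (Ideal.Quotient.mkₐ ℂ I), fun y hy => ?_⟩
  have : Ideal.Quotient.mkₐ ℂ I y = 0 := by
    have := congrArg e hy
    simpa using this
  rwa [Ideal.Quotient.mkₐ_eq_mk, Ideal.Quotient.eq_zero_iff_mem] at this

/-- Powers in `FA` correspond to powers of left multiplication. -/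
theorem La_pow (x : H) (n : ℕ) :
    La m (((toFA m u h x) ^ n : FA m u h) : H) = (La m x) ^ n := by
  induction n with
  | zero =>
      ext y
      show m (((1 : FA m u h) : H) ⊗ₜ[ℂ] y) = y
      exact h.2.2.1 y
  | succ n ih =>
      rw [pow_succ']
      have : ((toFA m u h x * (toFA m u h x) ^ n : FA m u h) : H)
          = m (x ⊗ₜ[ℂ] (((toFA m u h x) ^ n : FA m u h) : H)) := rfl
      erw [this, La_mul m u h, ih, ← Module.End.mul_eq_comp, ← pow_succ']

include h in
/-- An element orthogonal to all copyables is zero. -/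
theorem perp_copyables_eq_zero (x : H)
    (hx : ∀ ψ : H, Copyable m u ψ → ⟪ψ, x⟫_ℂ = 0) : x = 0 := by
  -- `x` lies in every maximal ideal
  have hmem : ∀ I : Ideal (FA m u h), I.IsMaximal → toFA m u h x ∈ I := by
    intro I hI
    obtain ⟨χ, hχ⟩ := char_of_maximal m u h I hI
    obtain ⟨ψ, hψc, hψ⟩ := copyable_of_char m u h χ
    exact hχ _ (by rw [← hψ (toFA m u h x)]; exact hx ψ hψc)
  have hjac : toFA m u h x ∈ Ideal.jacobson (⊥ : Ideal (FA m u h)) := by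
    rw [Ideal.jacobson]
    rw [Ideal.mem_sInf]
    intro J hJ
    exact hmem J hJ.2
  obtain ⟨n, hn⟩ := IsArtinianRing.isNilpotent_jacobson_bot (R := FA m u h)
  have hxn : ((toFA m u h x) ^ n : FA m u h) = 0 := by
    have : (toFA m u h x) ^ n ∈ (Ideal.jacobson (⊥ : Ideal (FA m u h))) ^ n :=
      Ideal.pow_mem_pow hjac n
    rw [hn] at this
    simpa using this
  have hLa : (La m x) ^ n = 0 := by
    rw [← La_pow m u h, hxn]
    ext y
    show m ((0 : H) ⊗ₜ[ℂ] y) = 0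
    rw [TensorProduct.zero_tmul, map_zero]
  have hLa0 : La m x = 0 := normal_nilpotent_zero (La_normal m u h x) hLa
  have : x = La m x (u 1) := (h.2.2.2.1 x).symm
  rw [this, hLa0]
  rfl

end FrobAux5
namespace FrobAux6
open FrobAux FrobAux2 FrobAux3 FrobAux4 FrobAux5

variable {H : Type*} [NormedAddCommGroup H] [InnerProductSpace ℂ H] [FiniteDimensional ℂ H]
variable (m : H ⊗[ℂ] H →ₗ[ℂ] H) (u : ℂ →ₗ[ℂ] H) (h : IsFrobenius m u)

include h in
theorem copyables_span :
    ⊤ ≤ Submodule.span ℂ (Set.range (fun ψ : {ψ : H // Copyable m u ψ} => (ψ : H))) := by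
  have hr : (Set.range (fun ψ : {ψ : H // Copyable m u ψ} => (ψ : H))) = {ψ : H | Copyable m u ψ} := Subtype.range_coe
  rw [hr]
  set W := Submodule.span ℂ {ψ : H | Copyable m u ψ} with hW
  have horth : Wᗮ = ⊥ := by
    rw [Submodule.eq_bot_iff]
    intro x hx
    refine perp_copyables_eq_zero m u h x fun ψ hψ => ?_
    exact (Submodule.mem_orthogonal W x).mp hx ψ (Submodule.subset_span hψ)
  rw [Submodule.orthogonal_eq_bot_iff] at horth
  rw [horth]

include h in
theorem copyables_linearIndependent :
    LinearIndependent ℂ (fun ψ : {ψ : H // Copyable m u ψ} => (ψ : H)) := by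
  classical
  set cm : {ψ : H // Copyable m u ψ} → (FA m u h →* ℂ) :=
    fun ψ => (charOfCopyable m u h ψ.2).toRingHom.toMonoidHom with hcm
  have cm_inj : Function.Injective cm := by
    intro ψ₁ ψ₂ h12
    ext1
    refine ext_inner_right ℂ fun y => ?_
    have := congrArg (fun F : FA m u h →* ℂ => F (toFA m u h y)) h12
    exact this
  have li : LinearIndependent ℂ (fun ψ : {ψ : H // Copyable m u ψ} => ⇑(cm ψ)) :=
    (linearIndependent_monoidHom (FA m u h) ℂ).comp cm cm_inj
  rw [linearIndependent_iff']
  intro s g hg i hi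
  have key : ∑ j ∈ s, (starRingEnd ℂ (g j)) • ⇑(cm j) = 0 := by
    funext y
    have h1 : ⟪∑ j ∈ s, g j • (j : H), (y : H)⟫_ℂ = 0 := by erw [hg, inner_zero_left]
    erw [sum_inner] at h1
    simp only [Finset.sum_apply, Pi.smul_apply, smul_eq_mul, Pi.zero_apply]
    rw [← h1]
    refine Finset.sum_congr rfl fun j _ => ?_
    exact (inner_smul_left _ _ _).symm
  have := linearIndependent_iff'.mp li s (fun j => starRingEnd ℂ (g j)) key i hi
  simpa using this

end FrobAux6
/-- Comonoid homomorphisms between commutative †-Frobenius monoids map copyable elements to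
copyable elements, and restriction to copyable elements is a bijection from comonoid
homomorphisms `H → K` to functions between the sets of copyable elements. -/
theorem comonoid_hom_equiv_functions
    {K : Type*} [NormedAddCommGroup K] [InnerProductSpace ℂ K] [FiniteDimensional ℂ K]
    (mH : H ⊗[ℂ] H →ₗ[ℂ] H) (uH : ℂ →ₗ[ℂ] H) (mK : K ⊗[ℂ] K →ₗ[ℂ] K) (uK : ℂ →ₗ[ℂ] K)
    (hH : IsFrobenius mH uH) (hK : IsFrobenius mK uK) :
    (∀ f : H →ₗ[ℂ] K,
        (LinearMap.adjoint mK ∘ₗ f = TensorProduct.map f f ∘ₗ LinearMap.adjoint mH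
            ∧ LinearMap.adjoint uK ∘ₗ f = LinearMap.adjoint uH) →
        ∀ ψ : H, Copyable mH uH ψ → Copyable mK uK (f ψ))
      ∧ ∃ Φ : {f : H →ₗ[ℂ] K //
            LinearMap.adjoint mK ∘ₗ f = TensorProduct.map f f ∘ₗ LinearMap.adjoint mH
              ∧ LinearMap.adjoint uK ∘ₗ f = LinearMap.adjoint uH} →
          ({ψ : H // Copyable mH uH ψ} → {χ : K // Copyable mK uK χ}),
          (∀ f ψ, (Φ f ψ : K) = (f : H →ₗ[ℂ] K) ψ) ∧ Function.Bijective Φ := by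
  classical
  have pres : ∀ f : H →ₗ[ℂ] K,
      (LinearMap.adjoint mK ∘ₗ f = TensorProduct.map f f ∘ₗ LinearMap.adjoint mH
          ∧ LinearMap.adjoint uK ∘ₗ f = LinearMap.adjoint uH) →
      ∀ ψ : H, Copyable mH uH ψ → Copyable mK uK (f ψ) := by
    intro f hf ψ hψ
    constructor
    · have h1 := LinearMap.congr_fun hf.1 ψ
      simp only [LinearMap.comp_apply] at h1
      rw [h1, hψ.1, TensorProduct.map_tmul]
    · have h2 := LinearMap.congr_fun hf.2 ψ
      simp only [LinearMap.comp_apply] at h2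
      rw [h2, hψ.2]
  refine ⟨pres, ?_⟩
  set b : Module.Basis {ψ : H // Copyable mH uH ψ} ℂ H :=
    Module.Basis.mk (FrobAux6.copyables_linearIndependent mH uH hH)
      (FrobAux6.copyables_span mH uH hH) with hb
  have hbψ : ∀ ψ : {ψ : H // Copyable mH uH ψ}, b ψ = (ψ : H) := fun ψ => by
    rw [hb, Module.Basis.mk_apply]
  refine ⟨fun f ψ => ⟨f.1 ψ.1, pres f.1 f.2 ψ.1 ψ.2⟩, fun f ψ => rfl, ?_, ?_⟩
  · -- injectivity
    intro f g hfg
    apply Subtype.ext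
    apply Module.Basis.ext b
    intro ψ
    rw [hbψ]
    exact congrArg Subtype.val (congrFun hfg ψ)
  · -- surjectivity
    intro G
    set f : H →ₗ[ℂ] K := b.constr ℂ (fun ψ => (G ψ : K)) with hf
    have hfψ : ∀ ψ : {ψ : H // Copyable mH uH ψ}, f (ψ : H) = (G ψ : K) := fun ψ => by
      rw [← hbψ ψ, hf, Module.Basis.constr_basis]
    refine ⟨⟨f, ?_, ?_⟩, ?_⟩
    · apply Module.Basis.ext b
      intro ψ
      rw [hbψ]
      simp only [LinearMap.comp_apply]
      rw [hfψ, (G ψ).2.1, ψ.2.1, TensorProduct.map_tmul, hfψ]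
    · apply Module.Basis.ext b
      intro ψ
      rw [hbψ]
      simp only [LinearMap.comp_apply]
      rw [hfψ, (G ψ).2.2, ψ.2.2]
    · funext ψ
      exact Subtype.ext (hfψ ψ)
end
end
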